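/- arXiv:1509.03788 — 7 statements merged into one kernel-verified Lean document; each statement's English description precedes it below -/
import Mathlib

section
/- For every α ≥ 1 there exist constants C₀ ≥ 1, C ≥ 1 and ε₀ ∈ (0,1), depending only on α, such that the following holds. Let ε ∈ (0, ε₀), let L, K ∈ ℕ with L ≥ 1 and K ≤ εL, let E₀ ∈ ℝ, and let (λ_k, a_k)_{0 ≤ k ≤ K} be near-boundary spectral data with constant α at E₀. Then for every integer n with 0 ≤ n < K, every real x ∈ [(λ_{n−1} + λ_n)/2, (λ_n + λ_{n+1})/2] (with the convention λ_{−1} := 2E₀ − λ₀), and every real y with C₀(n+1)/L² ≤ y ≤ ε⁵, one has Σ_{k=0}^{K} a_k·y/((λ_k − x)² + y²) ≤ C·ε. -/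
open Finset

/-- Near-boundary spectral data with constant `α ≥ 1` at `E₀`:
`lam 0 < lam 1 < ⋯ < lam K`, with
(i) `(k+1)²/(αL²) ≤ lam k − E₀ ≤ α(k+1)²/L²`,
(ii) `|lam k − lam m| ≥ |k² − m²|/(αL²)` for `k ≠ m`,
and nonnegative weights satisfying (iii) `a k ≤ α(k+1)²/L³`. -/
def NearBoundaryData (α : ℝ) (L K : ℕ) (E₀ : ℝ) (lam a : ℕ → ℝ) : Prop :=
  (∀ k m : ℕ, k < m → m ≤ K → lam k < lam m) ∧
  (∀ k ≤ K, ((k : ℝ) + 1) ^ 2 / (α * (L : ℝ) ^ 2) ≤ lam k - E₀ ∧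
    lam k - E₀ ≤ α * ((k : ℝ) + 1) ^ 2 / (L : ℝ) ^ 2) ∧
  (∀ k ≤ K, ∀ m ≤ K, k ≠ m →
    |(k : ℝ) ^ 2 - (m : ℝ) ^ 2| / (α * (L : ℝ) ^ 2) ≤ |lam k - lam m|) ∧
  (∀ k ≤ K, 0 ≤ a k) ∧
  (∀ k ≤ K, a k ≤ α * ((k : ℝ) + 1) ^ 2 / (L : ℝ) ^ 3)

private lemma half_bound {D y : ℝ} (hD : 0 < D) (hy : 0 < y) :
    D * y / (D ^ 2 + y ^ 2) ≤ 1 / 2 := by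
  rw [div_le_iff₀ (by positivity)]
  nlinarith [sq_nonneg (D - y)]

private lemma tele_aux (δ y : ℝ) (j : ℕ) (hδ : 0 < δ) (hy : 0 < y) :
    y / ((((j : ℝ) + 1) * δ) ^ 2 + y ^ 2) ≤
      2 / δ * (y / ((j : ℝ) * δ + y) - y / (((j : ℝ) + 1) * δ + y)) := by
  set s : ℝ := (j : ℝ) * δ with hs
  have hs0 : 0 ≤ s := mul_nonneg (Nat.cast_nonneg j) hδ.le
  have h1 : 0 < s + y := by linarith
  have e : ((j : ℝ) + 1) * δ = s + δ := by rw [hs]; ring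
  rw [e]
  have h2 : 0 < s + δ + y := by linarith
  have h3 : 2 / δ * (y / (s + y) - y / (s + δ + y)) = 2 * y / ((s + y) * (s + δ + y)) := by
    field_simp
    ring
  rw [h3, div_le_div_iff₀ (by positivity) (by positivity)]
  nlinarith [mul_nonneg hy.le (sq_nonneg (s + δ - y)), mul_nonneg hy.le (mul_pos hδ h2).le]

private lemma tele (δ y : ℝ) (hδ : 0 < δ) (hy : 0 < y) (M : ℕ) :
    ∑ j ∈ Finset.range M, y / ((((j : ℝ) + 1) * δ) ^ 2 + y ^ 2) ≤ 2 / δ := by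
  have key : ∀ j ∈ Finset.range M, y / ((((j : ℝ) + 1) * δ) ^ 2 + y ^ 2) ≤
      2 / δ * ((fun m : ℕ => y / ((m : ℝ) * δ + y)) j -
        (fun m : ℕ => y / ((m : ℝ) * δ + y)) (j + 1)) := by
    intro j _
    simp only
    push_cast
    exact tele_aux δ y j hδ hy
  refine le_trans (Finset.sum_le_sum key) ?_
  rw [← Finset.mul_sum, Finset.sum_range_sub' (fun m : ℕ => y / ((m : ℝ) * δ + y))]
  simp only [Nat.cast_zero, zero_mul, zero_add]
  rw [div_self (ne_of_gt hy)]
  have hgM : 0 ≤ y / ((M : ℝ) * δ + y) := by positivity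
  have h2δ : 0 ≤ 2 / δ := by positivity
  nlinarith

private lemma term_bound {a A y D d : ℝ} (ha : 0 ≤ a) (haA : a ≤ A) (hy : 0 < y)
    (hdD : d ^ 2 ≤ D ^ 2) :
    a * y / (D ^ 2 + y ^ 2) ≤ A * y / (d ^ 2 + y ^ 2) :=
  div_le_div₀ (mul_nonneg (ha.trans haA) hy.le)
    (mul_le_mul_of_nonneg_right haA hy.le) (by positivity) (by linarith)

set_option maxHeartbeats 4000000 in
/-- Lemma 4.2 (core estimate): in the box `A_{n,ε}`, i.e. for
`x ∈ [(λ_{n−1}+λ_n)/2, (λ_n+λ_{n+1})/2]` (with `λ_{−1} := 2E₀ − λ₀`) and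
`C₀(n+1)/L² ≤ y ≤ ε⁵`, the imaginary part of the near-boundary sum is `O(ε)`. -/
theorem stmt1 (α : ℝ) (hα : 1 ≤ α) :
    ∃ C₀ C ε₀ : ℝ, 1 ≤ C₀ ∧ 1 ≤ C ∧ 0 < ε₀ ∧ ε₀ < 1 ∧
    ∀ (ε : ℝ) (L K : ℕ) (E₀ : ℝ) (lam a : ℕ → ℝ),
      0 < ε → ε < ε₀ → 1 ≤ L → (K : ℝ) ≤ ε * L →
      NearBoundaryData α L K E₀ lam a →
      ∀ n : ℕ, n < K →
      ∀ x y : ℝ,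
        ((if n = 0 then 2 * E₀ - lam 0 else lam (n - 1)) + lam n) / 2 ≤ x →
        x ≤ (lam n + lam (n + 1)) / 2 →
        C₀ * ((n : ℝ) + 1) / (L : ℝ) ^ 2 ≤ y → y ≤ ε ^ 5 →
        ∑ k ∈ Finset.range (K + 1), a k * y / ((lam k - x) ^ 2 + y ^ 2) ≤ C * ε := by
  have hα0 : (0:ℝ) < α := by linarith
  refine ⟨α, 41 * α ^ 2, 1/2, hα, by nlinarith, by norm_num, by norm_num, ?_⟩
  intro ε L K E₀ lam a hε hεu hL hKL hdata n hnK x y hx1 hx2 hy1 hy2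
  obtain ⟨hmono, hband, hsep, ha0, haU⟩ := hdata
  have hL1 : (1:ℝ) ≤ (L:ℝ) := by exact_mod_cast hL
  have hL0 : (0:ℝ) < (L:ℝ) := by linarith
  have hLne : (L:ℝ) ≠ 0 := ne_of_gt hL0
  have hnKle : n ≤ K := le_of_lt hnK
  have hn1K : ((n:ℝ)) + 1 ≤ (K:ℝ) := by exact_mod_cast hnK
  have hnε : ((n:ℝ) + 1) / L ≤ ε := by rw [div_le_iff₀ hL0]; nlinarith
  have hKε' : (K:ℝ) / L ≤ ε := by rw [div_le_iff₀ hL0]; nlinarith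
  have hy0 : (0:ℝ) < y := lt_of_lt_of_le (by positivity) hy1
  set δ : ℝ := ((n:ℝ) + 1) / (6 * α * (L:ℝ) ^ 2) with hδdef
  clear_value δ
  have hδ0 : 0 < δ := by rw [hδdef]; positivity
  have hn1ne : ((n:ℝ) + 1) ≠ 0 := by positivity
  have hαne : α ≠ 0 := ne_of_gt hα0
  -- distances below
  have dist_low : ∀ j, j < n → ((j:ℝ) + 1) * δ ≤ x - lam (n - 1 - j) := by
    intro j hj
    have hn0 : n ≠ 0 := by omega
    have hx1' : (lam (n - 1) + lam n) / 2 ≤ x := by rwa [if_neg hn0] at hx1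
    have hn1 : (1:ℝ) ≤ (n:ℝ) := by
      have : 1 ≤ n := by omega
      exact_mod_cast this
    have hcast : ((n - 1 : ℕ) : ℝ) = (n : ℝ) - 1 := by
      have h' : n - 1 + 1 = n := by omega
      have := congrArg (Nat.cast : ℕ → ℝ) h'
      push_cast at this
      linarith
    rcases Nat.eq_zero_or_pos j with rfl | hj1
    · have hk : n - 1 - 0 = n - 1 := by omega
      rw [hk]
      have hkK : n - 1 ≤ K := by omega
      have hlt : lam (n - 1) < lam n := hmono (n - 1) n (by omega) hnKle
      have hs := hsep (n - 1) hkK n hnKle (by omega)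
      rw [hcast] at hs
      have habs2 : |((n:ℝ) - 1) ^ 2 - (n:ℝ) ^ 2| = (n:ℝ) ^ 2 - ((n:ℝ) - 1) ^ 2 := by
        rw [abs_sub_comm]
        exact abs_of_nonneg (by nlinarith)
      have habs1 : |lam (n - 1) - lam n| = lam n - lam (n - 1) := by
        rw [abs_sub_comm]
        exact abs_of_nonneg (by linarith)
      rw [habs1, habs2] at hs
      have e2 : ((n:ℝ) ^ 2 - ((n:ℝ) - 1) ^ 2) = 2 * (n:ℝ) - 1 := by ring
      rw [e2] at hs
      -- hs : (2n-1)/(αL²) ≤ lam n - lam (n-1)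
      have hδle : δ ≤ (2 * (n:ℝ) - 1) / (α * (L:ℝ) ^ 2) / 2 := by
        have hscal0 : (n:ℝ) + 1 ≤ 3 * (2 * (n:ℝ) - 1) := by linarith
        rw [hδdef, div_div, div_le_div_iff₀ (by positivity) (by positivity)]
        nlinarith [mul_le_mul_of_nonneg_right hscal0 (mul_pos hα0 (pow_pos hL0 2)).le]
      have hx3 : (lam n - lam (n - 1)) / 2 ≤ x - lam (n - 1) := by linarith
      have h9 : (2 * (n:ℝ) - 1) / (α * (L:ℝ) ^ 2) / 2 ≤ (lam n - lam (n - 1)) / 2 := by linarith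
      push_cast
      norm_num
      linarith
    · set k := n - 1 - j with hkdef
      have hkn : k + j + 1 = n := by omega
      have hkK : k ≤ K := by omega
      have hkn1 : k < n - 1 := by omega
      clear_value k
      have hkc : (k:ℝ) + (j:ℝ) + 1 = (n:ℝ) := by exact_mod_cast hkn
      have hj1' : (1:ℝ) ≤ (j:ℝ) := by exact_mod_cast hj1
      have hn1K' : n - 1 ≤ K := by omega
      have hlt : lam k < lam (n - 1) := hmono k (n - 1) hkn1 hn1K'
      have hlt2 : lam (n - 1) < lam n := hmono (n - 1) n (by omega) hnKle
      have hxk : lam (n - 1) ≤ x := by linarith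
      have hs := hsep k hkK (n - 1) hn1K' (by omega)
      rw [hcast] at hs
      have habs1 : |lam k - lam (n - 1)| = lam (n - 1) - lam k := by
        rw [abs_sub_comm]
        exact abs_of_nonneg (by linarith)
      have hk0 : (0:ℝ) ≤ (k:ℝ) := Nat.cast_nonneg k
      have habs2 : |(k:ℝ) ^ 2 - ((n:ℝ) - 1) ^ 2| = ((n:ℝ) - 1) ^ 2 - (k:ℝ) ^ 2 := by
        rw [abs_sub_comm]
        refine abs_of_nonneg ?_
        nlinarith [hkc, sq_nonneg (j:ℝ), mul_nonneg hk0 (by linarith : (0:ℝ) ≤ (j:ℝ))]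
      rw [habs1, habs2] at hs
      have hscal : ((j:ℝ) + 1) * ((n:ℝ) + 1) ≤ 6 * (((n:ℝ) - 1) ^ 2 - (k:ℝ) ^ 2) := by
        nlinarith [mul_nonneg (by linarith : (0:ℝ) ≤ (j:ℝ) - 1) (by linarith : (0:ℝ) ≤ 5 * (j:ℝ) + 2),
          mul_nonneg hk0 (by linarith : (0:ℝ) ≤ 11 * (j:ℝ) - 1)]
      have hfin : ((j:ℝ) + 1) * δ ≤ (((n:ℝ) - 1) ^ 2 - (k:ℝ) ^ 2) / (α * (L:ℝ) ^ 2) := by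
        have e : ((j:ℝ) + 1) * δ = (((j:ℝ) + 1) * ((n:ℝ) + 1)) / (6 * α * (L:ℝ) ^ 2) := by
          rw [hδdef]; ring
        rw [e, div_le_div_iff₀ (by positivity) (by positivity)]
        nlinarith [mul_le_mul_of_nonneg_right hscal (mul_pos hα0 (pow_pos hL0 2)).le]
      linarith
  -- distances above
  have dist_up : ∀ j : ℕ, n + 1 + j ≤ K →
      ((j:ℝ) + 1) * (((n:ℝ) + (j:ℝ) + 2) / (4 * α * (L:ℝ) ^ 2)) ≤ lam (n + 1 + j) - x := by
    intro j hjK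
    have hn1K'' : n + 1 ≤ K := by omega
    have hmn : lam n < lam (n + 1) := hmono n (n + 1) (by omega) hn1K''
    have hc1 : ((n + 1 : ℕ) : ℝ) = (n:ℝ) + 1 := by push_cast; ring
    rcases Nat.eq_zero_or_pos j with rfl | hj1
    · have hk : n + 1 + 0 = n + 1 := by omega
      rw [hk]
      have hs := hsep n hnKle (n + 1) hn1K'' (by omega)
      rw [hc1] at hs
      have habs1 : |lam n - lam (n + 1)| = lam (n + 1) - lam n := by
        rw [abs_sub_comm]; exact abs_of_nonneg (by linarith)
      have habs2 : |(n:ℝ) ^ 2 - ((n:ℝ) + 1) ^ 2| = ((n:ℝ) + 1) ^ 2 - (n:ℝ) ^ 2 := by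
        rw [abs_sub_comm]
        exact abs_of_nonneg (by nlinarith [(Nat.cast_nonneg n : (0:ℝ) ≤ (n:ℝ))])
      rw [habs1, habs2] at hs
      have e2 : ((n:ℝ) + 1) ^ 2 - (n:ℝ) ^ 2 = 2 * (n:ℝ) + 1 := by ring
      rw [e2] at hs
      have hx3 : (lam (n + 1) - lam n) / 2 ≤ lam (n + 1) - x := by linarith
      have hδle : ((n:ℝ) + 2) / (4 * α * (L:ℝ) ^ 2)
          ≤ (2 * (n:ℝ) + 1) / (α * (L:ℝ) ^ 2) / 2 := by
        have hscal0 : (n:ℝ) + 2 ≤ 2 * (2 * (n:ℝ) + 1) := by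
          have : (0:ℝ) ≤ (n:ℝ) := Nat.cast_nonneg n
          linarith
        rw [div_div, div_le_div_iff₀ (by positivity) (by positivity)]
        nlinarith [mul_le_mul_of_nonneg_right hscal0 (mul_pos hα0 (pow_pos hL0 2)).le]
      push_cast
      norm_num
      linarith
    · have hj1' : (1:ℝ) ≤ (j:ℝ) := by exact_mod_cast hj1
      have hxup : x ≤ lam (n + 1) := by linarith
      have hlt : lam (n + 1) < lam (n + 1 + j) := hmono (n + 1) (n + 1 + j) (by omega) hjK
      have hs := hsep (n + 1) hn1K'' (n + 1 + j) hjK (by omega)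
      have hc2 : ((n + 1 + j : ℕ) : ℝ) = (n:ℝ) + 1 + (j:ℝ) := by push_cast; ring
      rw [hc1, hc2] at hs
      have habs1 : |lam (n + 1) - lam (n + 1 + j)| = lam (n + 1 + j) - lam (n + 1) := by
        rw [abs_sub_comm]; exact abs_of_nonneg (by linarith)
      have hj0 : (0:ℝ) ≤ (j:ℝ) := Nat.cast_nonneg j
      have hn0' : (0:ℝ) ≤ (n:ℝ) := Nat.cast_nonneg n
      have habs2 : |((n:ℝ) + 1) ^ 2 - ((n:ℝ) + 1 + (j:ℝ)) ^ 2|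
          = ((n:ℝ) + 1 + (j:ℝ)) ^ 2 - ((n:ℝ) + 1) ^ 2 := by
        rw [abs_sub_comm]
        exact abs_of_nonneg (by nlinarith)
      rw [habs1, habs2] at hs
      have hscal : ((j:ℝ) + 1) * ((n:ℝ) + (j:ℝ) + 2)
          ≤ 4 * (((n:ℝ) + 1 + (j:ℝ)) ^ 2 - ((n:ℝ) + 1) ^ 2) := by
        nlinarith [mul_nonneg hn0' (by linarith : (0:ℝ) ≤ 7 * (j:ℝ) - 1),
          mul_nonneg (by linarith : (0:ℝ) ≤ (j:ℝ) - 1) (by linarith : (0:ℝ) ≤ 3 * (j:ℝ) + 8)]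
      have hfin : ((j:ℝ) + 1) * (((n:ℝ) + (j:ℝ) + 2) / (4 * α * (L:ℝ) ^ 2))
          ≤ (((n:ℝ) + 1 + (j:ℝ)) ^ 2 - ((n:ℝ) + 1) ^ 2) / (α * (L:ℝ) ^ 2) := by
        have e : ((j:ℝ) + 1) * (((n:ℝ) + (j:ℝ) + 2) / (4 * α * (L:ℝ) ^ 2))
            = (((j:ℝ) + 1) * ((n:ℝ) + (j:ℝ) + 2)) / (4 * α * (L:ℝ) ^ 2) := by ring
        rw [e, div_le_div_iff₀ (by positivity) (by positivity)]
        nlinarith [mul_le_mul_of_nonneg_right hscal (mul_pos hα0 (pow_pos hL0 2)).le]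
      linarith
  -- split the sum
  have hsplit : ∑ k ∈ Finset.range (K + 1), a k * y / ((lam k - x) ^ 2 + y ^ 2)
      = (∑ k ∈ Finset.range n, a k * y / ((lam k - x) ^ 2 + y ^ 2))
        + a n * y / ((lam n - x) ^ 2 + y ^ 2)
        + ∑ k ∈ Finset.Ico (n + 1) (K + 1), a k * y / ((lam k - x) ^ 2 + y ^ 2) := by
    rw [← Finset.sum_range_add_sum_Ico _ (show n + 1 ≤ K + 1 by omega), Finset.sum_range_succ]
  -- center bound
  have hcenter : a n * y / ((lam n - x) ^ 2 + y ^ 2) ≤ ε := by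
    have h1 : a n * y / ((lam n - x) ^ 2 + y ^ 2) ≤ a n / y := by
      rw [div_le_div_iff₀ (by positivity) hy0]
      nlinarith [mul_nonneg (ha0 n hnKle) (sq_nonneg (lam n - x))]
    have h2 : a n ≤ ε * y := by
      have hb := haU n hnKle
      have e : α * ((n:ℝ) + 1) ^ 2 / (L:ℝ) ^ 3
          = (((n:ℝ) + 1) / L) * (α * ((n:ℝ) + 1) / (L:ℝ) ^ 2) := by
        field_simp
      calc a n ≤ α * ((n:ℝ) + 1) ^ 2 / (L:ℝ) ^ 3 := hb
        _ = (((n:ℝ) + 1) / L) * (α * ((n:ℝ) + 1) / (L:ℝ) ^ 2) := e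
        _ ≤ ε * y := mul_le_mul hnε hy1 (by positivity) hε.le
    have h3 : a n / y ≤ ε := by rw [div_le_iff₀ hy0]; linarith
    linarith
  -- lower sum
  have hA : (0:ℝ) ≤ α * ((n:ℝ) + 1) ^ 2 / (L:ℝ) ^ 3 := by positivity
  have hlow : ∑ k ∈ Finset.range n, a k * y / ((lam k - x) ^ 2 + y ^ 2)
      ≤ 12 * α ^ 2 * ((n:ℝ) + 1) / L := by
    rw [← Finset.sum_range_reflect (fun k => a k * y / ((lam k - x) ^ 2 + y ^ 2)) n]
    have hterm : ∀ j ∈ Finset.range n,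
        a (n - 1 - j) * y / ((lam (n - 1 - j) - x) ^ 2 + y ^ 2)
          ≤ (α * ((n:ℝ) + 1) ^ 2 / (L:ℝ) ^ 3) * (y / ((((j:ℝ) + 1) * δ) ^ 2 + y ^ 2)) := by
      intro j hj
      have hj' : j < n := Finset.mem_range.mp hj
      have hd := dist_low j hj'
      have hkK : n - 1 - j ≤ K := by omega
      have haa : a (n - 1 - j) ≤ α * ((n:ℝ) + 1) ^ 2 / (L:ℝ) ^ 3 := by
        refine le_trans (haU _ hkK) ?_
        have h2 : ((n - 1 - j : ℕ) : ℝ) + 1 ≤ (n:ℝ) + 1 := by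
          have h3 : ((n - 1 - j : ℕ) : ℝ) ≤ (n:ℝ) := by exact_mod_cast (show n - 1 - j ≤ n by omega)
          linarith
        have h4 : (0:ℝ) ≤ ((n - 1 - j : ℕ) : ℝ) + 1 := by positivity
        have hsq2 : (((n - 1 - j : ℕ) : ℝ) + 1) ^ 2 ≤ ((n:ℝ) + 1) ^ 2 := by nlinarith
        rw [div_le_div_iff₀ (by positivity) (by positivity)]
        nlinarith [mul_le_mul_of_nonneg_left
          (mul_le_mul_of_nonneg_right hsq2 (pow_pos hL0 3).le) hα0.le]
      have h0 : 0 ≤ ((j:ℝ) + 1) * δ := by positivity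
      have hsq : (((j:ℝ) + 1) * δ) ^ 2 ≤ (lam (n - 1 - j) - x) ^ 2 := by
        nlinarith [mul_nonneg (sub_nonneg.mpr hd)
          (by linarith : (0:ℝ) ≤ x - lam (n - 1 - j) + ((j:ℝ) + 1) * δ)]
      have hh := term_bound (ha0 _ hkK) haa hy0 hsq
      calc a (n - 1 - j) * y / ((lam (n - 1 - j) - x) ^ 2 + y ^ 2)
          ≤ (α * ((n:ℝ) + 1) ^ 2 / (L:ℝ) ^ 3) * y / ((((j:ℝ) + 1) * δ) ^ 2 + y ^ 2) := hh
        _ = (α * ((n:ℝ) + 1) ^ 2 / (L:ℝ) ^ 3) * (y / ((((j:ℝ) + 1) * δ) ^ 2 + y ^ 2)) := by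
            ring
    refine le_trans (Finset.sum_le_sum hterm) ?_
    rw [← Finset.mul_sum]
    have hT := tele δ y hδ0 hy0 n
    have h1 := mul_le_mul_of_nonneg_left hT hA
    have h2 : (α * ((n:ℝ) + 1) ^ 2 / (L:ℝ) ^ 3) * (2 / δ) = 12 * α ^ 2 * ((n:ℝ) + 1) / L := by
      rw [hδdef]
      field_simp
      ring
    linarith
  -- upper sum
  have hup : ∑ k ∈ Finset.Ico (n + 1) (K + 1), a k * y / ((lam k - x) ^ 2 + y ^ 2)
      ≤ 24 * α ^ 2 * ((n:ℝ) + 1) / L + (K:ℝ) * (4 * α ^ 2 / L) := by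
    rw [Finset.sum_Ico_eq_sum_range]
    have hM : K + 1 - (n + 1) = K - n := by omega
    rw [hM]
    have hterm : ∀ j ∈ Finset.range (K - n),
        a (n + 1 + j) * y / ((lam (n + 1 + j) - x) ^ 2 + y ^ 2)
          ≤ (2 * α * ((n:ℝ) + 1) ^ 2 / (L:ℝ) ^ 3) * (y / ((((j:ℝ) + 1) * δ) ^ 2 + y ^ 2))
            + 4 * α ^ 2 / L := by
      intro j hj
      have hj' : j < K - n := Finset.mem_range.mp hj
      have hkK : n + 1 + j ≤ K := by omega
      have hd := dist_up j hkK
      have hu0 : 0 < ((j:ℝ) + 1) * (((n:ℝ) + (j:ℝ) + 2) / (4 * α * (L:ℝ) ^ 2)) := by positivity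
      have hD0 : 0 < lam (n + 1 + j) - x := lt_of_lt_of_le hu0 hd
      set D := lam (n + 1 + j) - x with hDdef
      have hcast : ((n + 1 + j : ℕ) : ℝ) = (n:ℝ) + 1 + (j:ℝ) := by push_cast; ring
      have hb := haU _ hkK
      rw [hcast] at hb
      have hpos : (0:ℝ) ≤ y / (D ^ 2 + y ^ 2) := by positivity
      have haa : a (n + 1 + j)
          ≤ (2 * α * ((n:ℝ) + 1) ^ 2 + 2 * α * ((j:ℝ) + 1) ^ 2) / (L:ℝ) ^ 3 := by
        refine le_trans hb ?_
        rw [div_le_div_iff₀ (by positivity) (by positivity)]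
        nlinarith [sq_nonneg ((n:ℝ) - (j:ℝ)), pow_pos hL0 3,
          mul_pos hα0 (pow_pos hL0 3)]
      have hstep1 : a (n + 1 + j) * y / (D ^ 2 + y ^ 2)
          ≤ (2 * α * ((n:ℝ) + 1) ^ 2 / (L:ℝ) ^ 3) * (y / (D ^ 2 + y ^ 2))
            + (2 * α * ((j:ℝ) + 1) ^ 2 / (L:ℝ) ^ 3) * (y / (D ^ 2 + y ^ 2)) := by
        have h5 := mul_le_mul_of_nonneg_right haa hpos
        calc a (n + 1 + j) * y / (D ^ 2 + y ^ 2)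
            = a (n + 1 + j) * (y / (D ^ 2 + y ^ 2)) := by ring
          _ ≤ ((2 * α * ((n:ℝ) + 1) ^ 2 + 2 * α * ((j:ℝ) + 1) ^ 2) / (L:ℝ) ^ 3)
              * (y / (D ^ 2 + y ^ 2)) := h5
          _ = (2 * α * ((n:ℝ) + 1) ^ 2 / (L:ℝ) ^ 3) * (y / (D ^ 2 + y ^ 2))
              + (2 * α * ((j:ℝ) + 1) ^ 2 / (L:ℝ) ^ 3) * (y / (D ^ 2 + y ^ 2)) := by ring
      have hδu : ((j:ℝ) + 1) * δ ≤ D := by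
        refine le_trans ?_ hd
        rw [hδdef]
        have h1 : ((n:ℝ) + 1) / (6 * α * (L:ℝ) ^ 2) ≤ ((n:ℝ) + (j:ℝ) + 2) / (4 * α * (L:ℝ) ^ 2) := by
          rw [div_le_div_iff₀ (by positivity) (by positivity)]
          nlinarith [mul_pos hα0 (pow_pos hL0 2),
            mul_nonneg (Nat.cast_nonneg j : (0:ℝ) ≤ (j:ℝ)) (mul_pos hα0 (pow_pos hL0 2)).le,
            mul_nonneg (Nat.cast_nonneg n : (0:ℝ) ≤ (n:ℝ)) (mul_pos hα0 (pow_pos hL0 2)).le]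
        exact mul_le_mul_of_nonneg_left h1 (by positivity)
      have hp1 : (2 * α * ((n:ℝ) + 1) ^ 2 / (L:ℝ) ^ 3) * (y / (D ^ 2 + y ^ 2))
          ≤ (2 * α * ((n:ℝ) + 1) ^ 2 / (L:ℝ) ^ 3) * (y / ((((j:ℝ) + 1) * δ) ^ 2 + y ^ 2)) := by
        apply mul_le_mul_of_nonneg_left ?_ (by positivity)
        apply div_le_div_of_nonneg_left hy0.le (by positivity)
        have h0 : 0 ≤ ((j:ℝ) + 1) * δ := by positivity
        nlinarith [mul_nonneg (sub_nonneg.mpr hδu) (by linarith : (0:ℝ) ≤ D + ((j:ℝ) + 1) * δ)]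
      have hp2 : (2 * α * ((j:ℝ) + 1) ^ 2 / (L:ℝ) ^ 3) * (y / (D ^ 2 + y ^ 2)) ≤ 4 * α ^ 2 / L := by
        have hjb : ((j:ℝ) + 1) ^ 2 ≤ 4 * α * (L:ℝ) ^ 2 * D := by
          have h1 : ((j:ℝ) + 1) ^ 2 ≤ ((j:ℝ) + 1) * ((n:ℝ) + (j:ℝ) + 2) := by
            nlinarith [(Nat.cast_nonneg n : (0:ℝ) ≤ (n:ℝ)), (Nat.cast_nonneg j : (0:ℝ) ≤ (j:ℝ))]
          have h2 : ((j:ℝ) + 1) * ((n:ℝ) + (j:ℝ) + 2)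
              = 4 * α * (L:ℝ) ^ 2 * (((j:ℝ) + 1) * (((n:ℝ) + (j:ℝ) + 2) / (4 * α * (L:ℝ) ^ 2))) := by
            field_simp
          have h3 := mul_le_mul_of_nonneg_left hd (by positivity : (0:ℝ) ≤ 4 * α * (L:ℝ) ^ 2)
          nlinarith
        have hhalf := half_bound hD0 hy0
        calc (2 * α * ((j:ℝ) + 1) ^ 2 / (L:ℝ) ^ 3) * (y / (D ^ 2 + y ^ 2))
            ≤ (2 * α * (4 * α * (L:ℝ) ^ 2 * D) / (L:ℝ) ^ 3) * (y / (D ^ 2 + y ^ 2)) := by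
              apply mul_le_mul_of_nonneg_right ?_ hpos
              rw [div_le_div_iff₀ (by positivity) (by positivity)]
              nlinarith [pow_pos hL0 3, mul_pos hα0 (pow_pos hL0 3)]
          _ = (8 * α ^ 2 / L) * (D * y / (D ^ 2 + y ^ 2)) := by
              field_simp
              ring
          _ ≤ (8 * α ^ 2 / L) * (1 / 2) := by
              apply mul_le_mul_of_nonneg_left hhalf (by positivity)
          _ = 4 * α ^ 2 / L := by ring
      calc a (n + 1 + j) * y / ((lam (n + 1 + j) - x) ^ 2 + y ^ 2)
          = a (n + 1 + j) * y / (D ^ 2 + y ^ 2) := by rw [hDdef]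
        _ ≤ _ := hstep1
        _ ≤ (2 * α * ((n:ℝ) + 1) ^ 2 / (L:ℝ) ^ 3) * (y / ((((j:ℝ) + 1) * δ) ^ 2 + y ^ 2))
            + 4 * α ^ 2 / L := add_le_add hp1 hp2
    refine le_trans (Finset.sum_le_sum hterm) ?_
    rw [Finset.sum_add_distrib, Finset.sum_const, Finset.card_range, ← Finset.mul_sum]
    have hT := tele δ y hδ0 hy0 (K - n)
    have hA2 : (0:ℝ) ≤ 2 * α * ((n:ℝ) + 1) ^ 2 / (L:ℝ) ^ 3 := by positivity
    have h1 := mul_le_mul_of_nonneg_left hT hA2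
    have h2 : (2 * α * ((n:ℝ) + 1) ^ 2 / (L:ℝ) ^ 3) * (2 / δ)
        = 24 * α ^ 2 * ((n:ℝ) + 1) / L := by
      rw [hδdef]
      field_simp
      ring
    have h3 : ((K - n : ℕ) : ℝ) ≤ (K:ℝ) := by exact_mod_cast Nat.sub_le K n
    have h4 : (K - n : ℕ) • (4 * α ^ 2 / L) ≤ (K:ℝ) * (4 * α ^ 2 / L) := by
      rw [nsmul_eq_mul]
      exact mul_le_mul_of_nonneg_right h3 (by positivity)
    linarith
  -- assemble
  rw [hsplit]
  have hfin1 : 12 * α ^ 2 * ((n:ℝ) + 1) / L ≤ 12 * α ^ 2 * ε := by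
    calc 12 * α ^ 2 * ((n:ℝ) + 1) / L = 12 * α ^ 2 * (((n:ℝ) + 1) / L) := by ring
      _ ≤ 12 * α ^ 2 * ε := mul_le_mul_of_nonneg_left hnε (by positivity)
  have hfin2 : 24 * α ^ 2 * ((n:ℝ) + 1) / L ≤ 24 * α ^ 2 * ε := by
    calc 24 * α ^ 2 * ((n:ℝ) + 1) / L = 24 * α ^ 2 * (((n:ℝ) + 1) / L) := by ring
      _ ≤ 24 * α ^ 2 * ε := mul_le_mul_of_nonneg_left hnε (by positivity)
  have hfin3 : (K:ℝ) * (4 * α ^ 2 / L) ≤ 4 * α ^ 2 * ε := by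
    calc (K:ℝ) * (4 * α ^ 2 / L) = 4 * α ^ 2 * ((K:ℝ) / L) := by ring
      _ ≤ 4 * α ^ 2 * ε := mul_le_mul_of_nonneg_left hKε' (by positivity)
  have hsq : (1:ℝ) ≤ α ^ 2 := by nlinarith
  nlinarith [mul_nonneg (sub_nonneg.mpr hsq) hε.le]
end

section
/- For every α ≥ 1 there exist C ≥ 1 and ε₀ ∈ (0,1), depending only on α, such that the following holds. Let ε ∈ (0, ε₀), L ≥ 1, K ≤ εL, let E₀ ∈ ℝ, and let (λ_k, a_k)_{0 ≤ k ≤ K} be near-boundary spectral data with constant α at E₀ satisfying in addition the generic-case regularity hypotheses (iv) and (v). Then for every integer n with 0 ≤ 2n ≤ K one has |Σ_{k=0, k≠n}^{K} a_k/(λ_k − λ_n)| ≤ C·ε. -/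
open Finset

/-- Generic-case regularity hypotheses (iv) and (v): the weights are Lipschitz in the
eigenvalues with constant `α/L`, and the eigenvalues are parametrized as
`lam k = ψ(k/L)` by a twice continuously differentiable function `ψ` on
`[0, (K+1)/L]` with `|ψ''| ≤ α`. -/
def GenericRegularity (α : ℝ) (L K : ℕ) (lam a : ℕ → ℝ) : Prop :=
  (∀ k ≤ K, ∀ m ≤ K, |a k - a m| ≤ α / (L : ℝ) * |lam k - lam m|) ∧
  ∃ ψ ψ' ψ'' : ℝ → ℝ,
    (∀ x ∈ Set.Icc (0 : ℝ) (((K : ℝ) + 1) / (L : ℝ)),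
      HasDerivWithinAt ψ (ψ' x) (Set.Icc (0 : ℝ) (((K : ℝ) + 1) / (L : ℝ))) x) ∧
    (∀ x ∈ Set.Icc (0 : ℝ) (((K : ℝ) + 1) / (L : ℝ)),
      HasDerivWithinAt ψ' (ψ'' x) (Set.Icc (0 : ℝ) (((K : ℝ) + 1) / (L : ℝ))) x) ∧
    ContinuousOn ψ'' (Set.Icc (0 : ℝ) (((K : ℝ) + 1) / (L : ℝ))) ∧
    (∀ x ∈ Set.Icc (0 : ℝ) (((K : ℝ) + 1) / (L : ℝ)), |ψ'' x| ≤ α) ∧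
    (∀ k ≤ K, lam k = ψ ((k : ℝ) / (L : ℝ)))

lemma lip_of_deriv {M α : ℝ} {g g' : ℝ → ℝ}
    (hd : ∀ x ∈ Set.Icc (0:ℝ) M, HasDerivWithinAt g (g' x) (Set.Icc (0:ℝ) M) x)
    (hb : ∀ x ∈ Set.Icc (0:ℝ) M, |g' x| ≤ α) :
    ∀ u ∈ Set.Icc (0:ℝ) M, ∀ v ∈ Set.Icc (0:ℝ) M, |g u - g v| ≤ α * |u - v| := by
  intro u hu v hv
  have := Convex.norm_image_sub_le_of_norm_hasDerivWithin_le hd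
    (fun x hx => by simpa [Real.norm_eq_abs] using hb x hx) (convex_Icc _ _) hv hu
  simpa [Real.norm_eq_abs] using this

lemma second_diff_bound {M α : ℝ} {ψ ψ' : ℝ → ℝ} (hα : 0 ≤ α)
    (hd : ∀ x ∈ Set.Icc (0:ℝ) M, HasDerivWithinAt ψ (ψ' x) (Set.Icc (0:ℝ) M) x)
    (hlip : ∀ u ∈ Set.Icc (0:ℝ) M, ∀ v ∈ Set.Icc (0:ℝ) M, |ψ' u - ψ' v| ≤ α * |u - v|)
    {x h : ℝ} (hh : 0 ≤ h) (h1 : 0 ≤ x - h) (h2 : x + h ≤ M) :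
    |ψ (x + h) + ψ (x - h) - 2 * ψ x| ≤ 2 * α * h ^ 2 := by
  have hx0 : 0 ≤ x := by linarith
  have m1 : Set.MapsTo (fun t => x + t) (Set.Icc (0:ℝ) h) (Set.Icc (0:ℝ) M) := by
    intro t ht
    obtain ⟨ha', hb'⟩ := ht
    exact ⟨by simp only; linarith, by simp only; linarith⟩
  have m2 : Set.MapsTo (fun t => x - t) (Set.Icc (0:ℝ) h) (Set.Icc (0:ℝ) M) := by
    intro t ht
    obtain ⟨ha', hb'⟩ := ht
    exact ⟨by simp only; linarith, by simp only; linarith⟩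
  set g : ℝ → ℝ := fun t => ψ (x + t) + ψ (x - t) - 2 * ψ x with hgdef
  have hg : ∀ t ∈ Set.Icc (0:ℝ) h,
      HasDerivWithinAt g (ψ' (x + t) - ψ' (x - t)) (Set.Icc (0:ℝ) h) t := by
    intro t ht
    have d1 : HasDerivWithinAt (fun t => ψ (x + t)) (ψ' (x + t) * 1) (Set.Icc (0:ℝ) h) t :=
      HasDerivWithinAt.comp t (hd (x + t) (m1 ht)) ((hasDerivWithinAt_id t _).const_add x) m1
    have d2 : HasDerivWithinAt (fun t => ψ (x - t)) (ψ' (x - t) * (-1)) (Set.Icc (0:ℝ) h) t :=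
      HasDerivWithinAt.comp t (hd (x - t) (m2 ht)) ((hasDerivWithinAt_id t _).const_sub x) m2
    have := (d1.add d2).sub_const (2 * ψ x)
    exact this.congr_deriv (by ring)
  have hbound : ∀ t ∈ Set.Icc (0:ℝ) h, |ψ' (x + t) - ψ' (x - t)| ≤ 2 * α * h := by
    intro t ht
    have := hlip (x + t) (m1 ht) (x - t) (m2 ht)
    have h3 : |(x + t) - (x - t)| = 2 * t := by
      rw [abs_of_nonneg] <;> linarith [ht.1]
    rw [h3] at this
    calc |ψ' (x + t) - ψ' (x - t)| ≤ α * (2 * t) := this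
      _ ≤ 2 * α * h := by nlinarith [ht.2, ht.1]
  have key := Convex.norm_image_sub_le_of_norm_hasDerivWithin_le hg
    (fun t ht => by simpa [Real.norm_eq_abs] using hbound t ht) (convex_Icc _ _)
    (Set.left_mem_Icc.2 hh) (Set.right_mem_Icc.2 hh)
  have hg0 : g 0 = 0 := by
    show ψ (x + 0) + ψ (x - 0) - 2 * ψ x = 0
    rw [add_zero, sub_zero]; ring
  rw [hg0, sub_zero] at key
  simpa [Real.norm_eq_abs, abs_of_nonneg hh, sq, mul_assoc] using key


lemma decomp_frac (A B dp dm : ℝ) (h1 : dp ≠ 0) (h2 : dm ≠ 0) :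
    B / (-dm) + A / dp = (A - B) / dp + B * (dm - dp) / (dp * dm) := by
  rw [div_neg]
  field_simp
  ring

lemma pair_est (α L ir nr dp dm Ap Am : ℝ) (hα : 1 ≤ α) (hLpos : 0 < L)
    (hir1 : 1 ≤ ir) (hirn : ir ≤ nr)
    (hdppos : 0 < dp) (hdmpos : 0 < dm)
    (hP1 : ir * (2 * nr + ir) ≤ dp * (α * L^2))
    (hP2 : ir * nr ≤ dm * (α * L^2))
    (hP3 : |dm - dp| * L^2 ≤ 2 * α * ir^2)
    (hP4 : |Ap - Am| * L ≤ α * (dp + dm))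
    (hP5 : 0 ≤ Am) (hP6 : Am * L^3 ≤ α * (nr + 1)^2) :
    |Am / (-dm) + Ap / dp| ≤ 7 * α ^ 4 / L := by
  have hα0 : (0:ℝ) < α := by linarith
  have hα2 : (1:ℝ) ≤ α^2 := one_le_pow₀ hα
  have hαcube : α ≤ α^3 := by nlinarith
  have hα34 : α^3 ≤ α^4 := by nlinarith [pow_nonneg hα0.le 3]
  rw [decomp_frac Ap Am dp dm hdppos.ne' hdmpos.ne']
  have hT1 : |(Ap - Am) / dp| ≤ 3 * α ^ 3 / L := by
    rw [abs_div, abs_of_pos hdppos, div_le_div_iff₀ hdppos hLpos]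
    have h2 : 3 * ir^2 ≤ dp * (α * L^2) := by nlinarith
    have h1 : dm - dp ≤ |dm - dp| := le_abs_self _
    have h3 : α * (dm - dp) * L^2 ≤ (2/3) * α^3 * dp * L^2 := by
      nlinarith [mul_le_mul_of_nonneg_left hP3 hα0.le,
        mul_le_mul_of_nonneg_left h2 (by positivity : (0:ℝ) ≤ (2/3) * α^2),
        mul_le_mul_of_nonneg_right (mul_le_mul_of_nonneg_left h1 hα0.le)
          (by positivity : (0:ℝ) ≤ L^2)]
    have h4 : α * (dm - dp) ≤ (2/3) * α^3 * dp :=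
      le_of_mul_le_mul_right
        (by linarith : (α * (dm - dp)) * L^2 ≤ ((2/3) * α^3 * dp) * L^2)
        (by positivity : (0:ℝ) < L^2)
    linarith [mul_nonneg (by linarith : (0:ℝ) ≤ (7/3) * α^3 - 2 * α) hdppos.le]
  have hT2 : |Am * (dm - dp) / (dp * dm)| ≤ 4 * α ^ 4 / L := by
    rw [abs_div, abs_mul, abs_of_nonneg hP5, abs_of_pos (mul_pos hdppos hdmpos),
      div_le_div_iff₀ (mul_pos hdppos hdmpos) hLpos]
    have hq1 : (Am * L^3) * (|dm - dp| * L^2) ≤ (α * (nr + 1)^2) * (2 * α * ir^2) :=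
      mul_le_mul hP6 hP3 (by positivity) (by positivity)
    have hq3 : (nr + 1)^2 ≤ 2 * (2 * nr + ir) * nr := by nlinarith
    have hq2 : (ir * (2 * nr + ir)) * (ir * nr) ≤ (dp * (α * L^2)) * (dm * (α * L^2)) :=
      mul_le_mul hP1 hP2 (mul_nonneg (by linarith) (by linarith))
        (mul_nonneg hdppos.le (by positivity))
    have step : Am * |dm - dp| * L * L^4 ≤ 4 * α ^ 4 * (dp * dm) * L^4 := by
      calc Am * |dm - dp| * L * L^4 = (Am * L^3) * (|dm - dp| * L^2) := by ring
        _ ≤ (α * (nr + 1)^2) * (2 * α * ir^2) := hq1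
        _ = 2 * α^2 * ir^2 * (nr + 1)^2 := by ring
        _ ≤ 2 * α^2 * ir^2 * (2 * (2 * nr + ir) * nr) :=
            mul_le_mul_of_nonneg_left hq3 (by positivity)
        _ = 4 * α^2 * ((ir * (2 * nr + ir)) * (ir * nr)) := by ring
        _ ≤ 4 * α^2 * ((dp * (α * L^2)) * (dm * (α * L^2))) :=
            mul_le_mul_of_nonneg_left hq2 (by positivity)
        _ = 4 * α ^ 4 * (dp * dm) * L^4 := by ring
    exact le_of_mul_le_mul_right step (by positivity)
  calc |(Ap - Am) / dp + Am * (dm - dp) / (dp * dm)|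
      ≤ |(Ap - Am) / dp| + |Am * (dm - dp) / (dp * dm)| := abs_add_le _ _
    _ ≤ 3 * α ^ 3 / L + 4 * α ^ 4 / L := add_le_add hT1 hT2
    _ ≤ 7 * α ^ 4 / L := by
        rw [← add_div, div_le_div_iff₀ hLpos hLpos]
        have h34 : 3 * α^3 + 4 * α^4 ≤ 7 * α^4 := by linarith
        exact mul_le_mul_of_nonneg_right h34 hLpos.le


set_option maxHeartbeats 1000000 in
/-- Main step of Lemma 5.1: the near-boundary part of the sum with the `n`-th term
removed, evaluated at `λ_n`, is of size `ε` thanks to a two-sided cancellation. -/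
theorem stmt5 (α : ℝ) (hα : 1 ≤ α) :
    ∃ C ε₀ : ℝ, 1 ≤ C ∧ 0 < ε₀ ∧ ε₀ < 1 ∧
    ∀ (ε : ℝ) (L K : ℕ) (E₀ : ℝ) (lam a : ℕ → ℝ),
      0 < ε → ε < ε₀ → 1 ≤ L → (K : ℝ) ≤ ε * L →
      NearBoundaryData α L K E₀ lam a →
      GenericRegularity α L K lam a →
      ∀ n : ℕ, 2 * n ≤ K →
      |∑ k ∈ (Finset.range (K + 1)).erase n, a k / (lam k - lam n)| ≤ C * ε := by
  have hα4 : (1:ℝ) ≤ α ^ 4 := one_le_pow₀ hα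
  have hα0 : (0:ℝ) < α := by linarith
  refine ⟨10 * α ^ 4, 1/2, by linarith, by norm_num, by norm_num, ?_⟩
  intro ε L K E₀ lam a hε hε₀ hL hKL hNB hGR n hn
  obtain ⟨hmono, _hi, hii, hanonneg, habd⟩ := hNB
  obtain ⟨hlipA, ψ, ψ', ψ'', hdψ, hdψ', _, hψ''bd, hval⟩ := hGR
  have hLpos : (0:ℝ) < L := by exact_mod_cast Nat.lt_of_lt_of_le Nat.zero_lt_one hL
  have hnK : n ≤ K := by omega
  set f : ℕ → ℝ := fun k => a k / (lam k - lam n) with hfdef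
  have hlipψ' := lip_of_deriv hdψ' hψ''bd
  -- far terms
  have hfar : ∀ k, 2 * n + 1 ≤ k → k ≤ K → 0 ≤ f k ∧ f k ≤ 6 * α ^ 2 / L := by
    intro k hk1 hkK
    have hnk : n < k := by omega
    have hpos : 0 < lam k - lam n := sub_pos.2 (hmono n k hnk hkK)
    have hkn : (n:ℝ) < (k:ℝ) := by exact_mod_cast hnk
    have hn0 : (0:ℝ) ≤ (n:ℝ) := Nat.cast_nonneg n
    have hk1' : 2 * (n:ℝ) + 1 ≤ (k:ℝ) := by exact_mod_cast hk1
    have hlow := hii k hkK n hnK (by omega)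
    rw [abs_of_nonneg (by nlinarith : (0:ℝ) ≤ (k:ℝ)^2 - (n:ℝ)^2),
      abs_of_pos hpos, div_le_iff₀ (by positivity)] at hlow
    have hak := (le_div_iff₀ (by positivity : (0:ℝ) < (L:ℝ)^3)).1 (habd k hkK)
    constructor
    · exact div_nonneg (hanonneg k hkK) hpos.le
    · rw [div_le_div_iff₀ hpos hLpos]
      have key : ((k:ℝ) + 1)^2 ≤ 6 * ((k:ℝ)^2 - (n:ℝ)^2) := by nlinarith
      have step : a k * (L:ℝ) * (L:ℝ)^2 ≤ 6 * α ^ 2 * (lam k - lam n) * (L:ℝ)^2 := by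
        nlinarith [mul_le_mul_of_nonneg_left key hα0.le,
          mul_le_mul_of_nonneg_left hlow (by positivity : (0:ℝ) ≤ 6 * α)]
      exact le_of_mul_le_mul_right step (by positivity)
  -- pair bound
  have hpair : ∀ j ∈ Finset.range n, |f (n - (j+1)) + f (n + (j+1))| ≤ 7 * α ^ 4 / L := by
    intro j hj
    have hj' : j < n := Finset.mem_range.1 hj
    obtain ⟨i, hidef⟩ : ∃ i, i = j + 1 := ⟨_, rfl⟩
    have hin : i ≤ n := by omega
    have hn1 : 1 ≤ n := by omega
    have hniK : n + i ≤ K := by omega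
    have hmiK : n - i ≤ K := by omega
    have hir1 : (1:ℝ) ≤ (i:ℝ) := by exact_mod_cast (by omega : 1 ≤ i)
    have hirn : (i:ℝ) ≤ (n:ℝ) := by exact_mod_cast hin
    have hnr1 : (1:ℝ) ≤ (n:ℝ) := le_trans hir1 hirn
    have hcastm : ((n - i : ℕ) : ℝ) = (n:ℝ) - (i:ℝ) := Nat.cast_sub hin
    have hdppos : 0 < lam (n + i) - lam n := sub_pos.2 (hmono n (n + i) (by omega) hniK)
    have hdmpos : 0 < lam n - lam (n - i) := sub_pos.2 (hmono (n - i) n (by omega) hnK)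
    have hP1 : (i:ℝ) * (2 * (n:ℝ) + (i:ℝ)) ≤ (lam (n + i) - lam n) * (α * (L:ℝ)^2) := by
      have h := hii (n + i) hniK n hnK (by omega)
      have hc : ((n + i : ℕ):ℝ)^2 - (n:ℝ)^2 = (i:ℝ) * (2 * (n:ℝ) + (i:ℝ)) := by
        push_cast; ring
      rw [hc, abs_of_nonneg (by nlinarith), abs_of_pos hdppos,
        div_le_iff₀ (by positivity)] at h
      exact h
    have hP2 : (i:ℝ) * (n:ℝ) ≤ (lam n - lam (n - i)) * (α * (L:ℝ)^2) := by
      have h := hii (n - i) hmiK n hnK (by omega)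
      have hc : ((n - i : ℕ):ℝ)^2 - (n:ℝ)^2 = -((i:ℝ) * (2 * (n:ℝ) - (i:ℝ))) := by
        rw [hcastm]; ring
      have hc2 : lam (n - i) - lam n = -(lam n - lam (n - i)) := by ring
      rw [hc, hc2, abs_neg, abs_neg, abs_of_nonneg (by nlinarith), abs_of_pos hdmpos,
        div_le_iff₀ (by positivity)] at h
      nlinarith [h, mul_nonneg (by linarith : (0:ℝ) ≤ (i:ℝ)) (by linarith : (0:ℝ) ≤ (n:ℝ) - (i:ℝ))]
    have hP3 : |(lam n - lam (n - i)) - (lam (n + i) - lam n)| * (L:ℝ)^2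
        ≤ 2 * α * (i:ℝ)^2 := by
      have hsd := second_diff_bound (M := ((K:ℝ)+1)/(L:ℝ)) hα0.le hdψ hlipψ'
        (x := (n:ℝ) / L) (h := (i:ℝ) / L)
        (by positivity)
        (by rw [div_sub_div_same]; exact div_nonneg (by linarith) hLpos.le)
        (by have hc : ((n:ℝ) + (i:ℝ)) ≤ (K:ℝ) + 1 := by
              exact_mod_cast (by omega : n + i ≤ K + 1)
            rw [← add_div, div_le_div_iff₀ hLpos hLpos]
            exact mul_le_mul_of_nonneg_right hc hLpos.le)
      have hv1 : ψ ((n:ℝ) / L + (i:ℝ) / L) = lam (n + i) := by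
        rw [hval (n + i) hniK]; congr 1; push_cast; ring
      have hv2 : ψ ((n:ℝ) / L - (i:ℝ) / L) = lam (n - i) := by
        rw [hval (n - i) hmiK]; congr 1; rw [hcastm]; ring
      have hv3 : ψ ((n:ℝ) / L) = lam n := (hval n hnK).symm
      rw [hv1, hv2, hv3] at hsd
      have he : lam (n + i) + lam (n - i) - 2 * lam n
          = -((lam n - lam (n - i)) - (lam (n + i) - lam n)) := by ring
      rw [he, abs_neg] at hsd
      have hmul := mul_le_mul_of_nonneg_right hsd (by positivity : (0:ℝ) ≤ (L:ℝ)^2)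
      calc |(lam n - lam (n - i)) - (lam (n + i) - lam n)| * (L:ℝ)^2
          ≤ 2 * α * ((i:ℝ) / L)^2 * (L:ℝ)^2 := hmul
        _ = 2 * α * (i:ℝ)^2 := by field_simp
    have hP4 : |a (n + i) - a (n - i)| * L
        ≤ α * ((lam (n + i) - lam n) + (lam n - lam (n - i))) := by
      have h := hlipA (n + i) hniK (n - i) hmiK
      have hc : lam (n + i) - lam (n - i)
          = (lam (n + i) - lam n) + (lam n - lam (n - i)) := by ring
      rw [hc, abs_of_pos (show (0:ℝ) < lam (n + i) - lam n + (lam n - lam (n - i)) by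
        linarith)] at h
      calc |a (n + i) - a (n - i)| * L
          ≤ (α / L * ((lam (n + i) - lam n) + (lam n - lam (n - i)))) * L :=
            mul_le_mul_of_nonneg_right h hLpos.le
        _ = α * ((lam (n + i) - lam n) + (lam n - lam (n - i))) := by field_simp
    have hP5 : 0 ≤ a (n - i) := hanonneg (n - i) hmiK
    have hP6 : a (n - i) * (L:ℝ)^3 ≤ α * ((n:ℝ) + 1)^2 := by
      have h := (le_div_iff₀ (by positivity : (0:ℝ) < (L:ℝ)^3)).1 (habd (n - i) hmiK)
      calc a (n - i) * (L:ℝ)^3 ≤ α * (((n - i : ℕ):ℝ) + 1)^2 := h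
        _ ≤ α * ((n:ℝ) + 1)^2 := by
            rw [hcastm]
            have hsq : ((n:ℝ) - (i:ℝ) + 1)^2 ≤ ((n:ℝ) + 1)^2 := by nlinarith
            exact mul_le_mul_of_nonneg_left hsq hα0.le
    have key := pair_est α L (i:ℝ) (n:ℝ) (lam (n + i) - lam n) (lam n - lam (n - i))
      (a (n + i)) (a (n - i)) hα hLpos hir1 hirn hdppos hdmpos hP1 hP2 hP3 hP4 hP5 hP6
    have hrw : f (n - (j+1)) + f (n + (j+1))
        = a (n - i) / -(lam n - lam (n - i)) + a (n + i) / (lam (n + i) - lam n) := by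
      rw [← hidef]
      show a (n - i) / (lam (n - i) - lam n) + a (n + i) / (lam (n + i) - lam n) = _
      congr 2
      ring
    rw [hrw]
    exact key
  -- sum decomposition
  have hsplit : ∑ k ∈ (Finset.range (K + 1)).erase n, f k
      = (∑ j ∈ Finset.range n, (f (n - (j+1)) + f (n + (j+1))))
        + ∑ k ∈ Finset.Ico (2*n+1) (K+1), f k := by
    rw [Finset.sum_erase_eq_sub (Finset.mem_range.2 (by omega))]
    rw [Finset.range_eq_Ico,
      ← Finset.sum_Ico_consecutive f (by omega : 0 ≤ n + 1) (by omega : n + 1 ≤ K + 1),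
      ← Finset.sum_Ico_consecutive f (by omega : n + 1 ≤ 2*n + 1) (by omega : 2*n+1 ≤ K + 1),
      ← Finset.range_eq_Ico, Finset.sum_range_succ]
    have eE : ∑ k ∈ Finset.range n, f k = ∑ j ∈ Finset.range n, f (n - (j+1)) := by
      rw [← Finset.sum_range_reflect]
      exact Finset.sum_congr rfl fun j hj => by congr 1; omega
    have eG : ∑ k ∈ Finset.Ico (n+1) (2*n+1), f k = ∑ j ∈ Finset.range n, f (n + (j+1)) := by
      rw [Finset.sum_Ico_eq_sum_range]
      have h : 2*n+1 - (n+1) = n := by omega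
      rw [h]
      exact Finset.sum_congr rfl fun j hj => by congr 1; omega
    rw [eE, eG, Finset.sum_add_distrib]
    ring
  rw [hsplit]
  have hnear : |∑ j ∈ Finset.range n, (f (n - (j+1)) + f (n + (j+1)))|
      ≤ (n:ℝ) * (7 * α ^ 4 / L) := by
    calc |∑ j ∈ Finset.range n, (f (n - (j+1)) + f (n + (j+1)))|
        ≤ ∑ j ∈ Finset.range n, |f (n - (j+1)) + f (n + (j+1))| :=
          Finset.abs_sum_le_sum_abs _ _
      _ ≤ (Finset.range n).card • (7 * α ^ 4 / L) := Finset.sum_le_card_nsmul _ _ _ hpair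
      _ = (n:ℝ) * (7 * α ^ 4 / L) := by
          rw [Finset.card_range, nsmul_eq_mul]
  have hfarsum : |∑ k ∈ Finset.Ico (2*n+1) (K+1), f k| ≤ (K:ℝ) * (6 * α ^ 2 / L) := by
    have h0 : 0 ≤ ∑ k ∈ Finset.Ico (2*n+1) (K+1), f k :=
      Finset.sum_nonneg fun k hk => by
        have := Finset.mem_Ico.1 hk
        exact (hfar k this.1 (by omega)).1
    rw [abs_of_nonneg h0]
    calc ∑ k ∈ Finset.Ico (2*n+1) (K+1), f k
        ≤ (Finset.Ico (2*n+1) (K+1)).card • (6 * α ^ 2 / L) :=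
          Finset.sum_le_card_nsmul _ _ _ fun k hk => by
            have := Finset.mem_Ico.1 hk
            exact (hfar k this.1 (by omega)).2
      _ ≤ (K:ℝ) * (6 * α ^ 2 / L) := by
          rw [Nat.card_Ico, nsmul_eq_mul]
          apply mul_le_mul_of_nonneg_right _ (by positivity)
          exact_mod_cast (by omega : K + 1 - (2*n+1) ≤ K)
  have h2n : 2 * (n:ℝ) ≤ (K:ℝ) := by exact_mod_cast hn
  calc |(∑ j ∈ Finset.range n, (f (n - (j+1)) + f (n + (j+1))))
        + ∑ k ∈ Finset.Ico (2*n+1) (K+1), f k|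
      ≤ (n:ℝ) * (7 * α ^ 4 / L) + (K:ℝ) * (6 * α ^ 2 / L) :=
        le_trans (abs_add_le _ _) (add_le_add hnear hfarsum)
    _ ≤ 10 * α ^ 4 * ε := by
        rw [div_eq_mul_inv, div_eq_mul_inv]
        have hLinv : (0:ℝ) < ((L:ℝ))⁻¹ := by positivity
        have hnL : (n:ℝ) ≤ ε * L / 2 := by linarith
        have hmul : ((n:ℝ) * (7 * α ^ 4) + (K:ℝ) * (6 * α ^ 2)) * ((L:ℝ))⁻¹
            ≤ (10 * α ^ 4 * ε * L) * ((L:ℝ))⁻¹ := by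
          apply mul_le_mul_of_nonneg_right _ hLinv.le
          nlinarith [mul_le_mul_of_nonneg_right hKL (by positivity : (0:ℝ) ≤ 6 * α^2),
            mul_le_mul_of_nonneg_right hnL (by positivity : (0:ℝ) ≤ 7 * α^4),
            mul_nonneg (mul_nonneg hε.le hLpos.le) (by nlinarith : (0:ℝ) ≤ α^4 - α^2)]
        calc (n:ℝ) * (7 * α ^ 4 * ((L:ℝ))⁻¹) + (K:ℝ) * (6 * α ^ 2 * ((L:ℝ))⁻¹)
            = ((n:ℝ) * (7 * α ^ 4) + (K:ℝ) * (6 * α ^ 2)) * ((L:ℝ))⁻¹ := by ring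
          _ ≤ (10 * α ^ 4 * ε * L) * ((L:ℝ))⁻¹ := hmul
          _ = 10 * α ^ 4 * ε := by field_simp
end

section
/- For all α ≥ 1 and M ≥ 1 there is a constant C, depending only on α and M, such that the following holds. Let L ≥ 1 and n ≥ 1 be integers, let ψ be a twice continuously differentiable real-valued function on [0, (2n+1)/L] with |ψ''(x)| ≤ M for all x in this interval, set λ_k := ψ(k/L) for 0 ≤ k ≤ 2n, and assume |λ_k − λ_m| ≥ |k² − m²|/(αL²) for all 0 ≤ k ≠ m ≤ 2n. Then |Σ_{k=0}^{n−1} (1/(λ_k − λ_n) + 1/(λ_{2n−k} − λ_n))| ≤ C·L²/n. -/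
set_option maxHeartbeats 1000000

open Finset

/-- Symmetrization estimate (equations (7.34)–(7.37)) in the proof of Lemma 5.1:
if `λ_k = ψ(k/L)` with `ψ` twice continuously differentiable, `|ψ''| ≤ M`, and the
eigenvalues satisfy an `|k² − m²|/(αL²)` lower spacing bound, then the symmetrized
sum of reciprocals around the index `n` is at most `C L²/n`. -/
theorem stmt6 (α M : ℝ) (hα : 1 ≤ α) (hM : 1 ≤ M) :
    ∃ C : ℝ, 0 < C ∧
    ∀ (L n : ℕ) (ψ ψ' ψ'' : ℝ → ℝ),
      1 ≤ L → 1 ≤ n →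
      (∀ x ∈ Set.Icc (0 : ℝ) ((2 * (n : ℝ) + 1) / (L : ℝ)),
        HasDerivWithinAt ψ (ψ' x) (Set.Icc (0 : ℝ) ((2 * (n : ℝ) + 1) / (L : ℝ))) x) →
      (∀ x ∈ Set.Icc (0 : ℝ) ((2 * (n : ℝ) + 1) / (L : ℝ)),
        HasDerivWithinAt ψ' (ψ'' x) (Set.Icc (0 : ℝ) ((2 * (n : ℝ) + 1) / (L : ℝ))) x) →
      ContinuousOn ψ'' (Set.Icc (0 : ℝ) ((2 * (n : ℝ) + 1) / (L : ℝ))) →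
      (∀ x ∈ Set.Icc (0 : ℝ) ((2 * (n : ℝ) + 1) / (L : ℝ)), |ψ'' x| ≤ M) →
      (∀ k m : ℕ, k ≤ 2 * n → m ≤ 2 * n → k ≠ m →
        |(k : ℝ) ^ 2 - (m : ℝ) ^ 2| / (α * (L : ℝ) ^ 2) ≤
          |ψ ((k : ℝ) / (L : ℝ)) - ψ ((m : ℝ) / (L : ℝ))|) →
      |∑ k ∈ Finset.range n,
          (1 / (ψ ((k : ℝ) / (L : ℝ)) - ψ ((n : ℝ) / (L : ℝ))) +
           1 / (ψ (((2 * n - k : ℕ) : ℝ) / (L : ℝ)) - ψ ((n : ℝ) / (L : ℝ))))| ≤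
        C * (L : ℝ) ^ 2 / (n : ℝ) := by
  refine ⟨α ^ 2 * M, by positivity, ?_⟩
  intro L n ψ ψ' ψ'' hL hn hψ hψ' hcont hMb hsp
  have hL0 : (0 : ℝ) < L := by exact_mod_cast hL
  have hn0 : (0 : ℝ) < n := by exact_mod_cast hn
  have hα0 : (0 : ℝ) < α := by linarith
  have hM0 : (0 : ℝ) < M := by linarith
  set I : Set ℝ := Set.Icc (0 : ℝ) ((2 * (n : ℝ) + 1) / (L : ℝ)) with hIdef
  have hmemI : ∀ y : ℝ, 0 ≤ y → y ≤ 2 * (n : ℝ) / L → y ∈ I := by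
    intro y hy1 hy2
    refine ⟨hy1, le_trans hy2 ?_⟩
    gcongr
    linarith
  -- Lipschitz bound for ψ' with constant M on I
  have hlip : ∀ s ∈ I, ∀ t ∈ I, |ψ' s - ψ' t| ≤ M * |s - t| := by
    intro s hs t ht
    have := Convex.norm_image_sub_le_of_norm_hasDerivWithin_le hψ'
      (fun x hx => by simpa [Real.norm_eq_abs] using hMb x hx) (convex_Icc _ _) ht hs
    simpa [Real.norm_eq_abs] using this
  -- per-term bound
  have key : ∀ k ∈ Finset.range n,
      |1 / (ψ ((k : ℝ) / (L : ℝ)) - ψ ((n : ℝ) / (L : ℝ))) +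
       1 / (ψ (((2 * n - k : ℕ) : ℝ) / (L : ℝ)) - ψ ((n : ℝ) / (L : ℝ)))| ≤
      α ^ 2 * M * (L : ℝ) ^ 2 / (n : ℝ) ^ 2 := by
    intro k hk
    rw [Finset.mem_range] at hk
    have hkle : k ≤ 2 * n := by omega
    have hk2n : ((2 * n - k : ℕ) : ℝ) = 2 * (n : ℝ) - k := by
      push_cast [hkle]; ring
    have hkn : (k : ℝ) < n := by exact_mod_cast hk
    have hk0 : (0 : ℝ) ≤ k := Nat.cast_nonneg k
    set x : ℝ := (n : ℝ) / L with hxdef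
    set h : ℝ := ((n : ℝ) - k) / L with hhdef
    have hh0 : 0 < h := by
      rw [hhdef]
      exact div_pos (by linarith) hL0
    have hxh1 : x + h = (2 * (n : ℝ) - k) / L := by rw [hxdef, hhdef]; ring
    have hxh2 : x - h = (k : ℝ) / L := by rw [hxdef, hhdef]; ring
    set J : Set ℝ := Set.Icc (0 : ℝ) h with hJdef
    have hmem1 : ∀ t ∈ J, x + t ∈ I := by
      rintro t ⟨ht1, ht2⟩
      refine hmemI _ (by positivity) ?_
      have : x + t ≤ x + h := by linarith
      refine le_trans this ?_
      rw [hxh1]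
      gcongr
      linarith
    have hmem2 : ∀ t ∈ J, x - t ∈ I := by
      rintro t ⟨ht1, ht2⟩
      have h1 : (0 : ℝ) ≤ x - t := by
        have : x - t ≥ x - h := by linarith
        rw [hxh2] at this
        have : (0:ℝ) ≤ (k : ℝ) / L := by positivity
        linarith
      refine hmemI _ h1 ?_
      have : x - t ≤ x := by linarith
      refine le_trans this ?_
      rw [hxdef]
      gcongr
      linarith
    -- g and its derivative
    set g : ℝ → ℝ := fun t => ψ (x + t) + ψ (x - t) with hgdef
    have hg : ∀ t ∈ J, HasDerivWithinAt g (ψ' (x + t) - ψ' (x - t)) J t := by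
      intro t ht
      have h1 : HasDerivWithinAt (fun t => ψ (x + t)) (ψ' (x + t) * 1) J t :=
        HasDerivWithinAt.comp t (hψ (x + t) (hmem1 t ht))
          ((hasDerivWithinAt_id t J).const_add x) (fun s hs => hmem1 s hs)
      have h2 : HasDerivWithinAt (fun t => ψ (x - t)) (ψ' (x - t) * (-1)) J t :=
        HasDerivWithinAt.comp t (hψ (x - t) (hmem2 t ht))
          ((hasDerivWithinAt_id t J).const_sub x) (fun s hs => hmem2 s hs)
      have := h1.add h2
      exact this.congr_deriv (by ring)
    have hgbound : ∀ t ∈ J, ‖ψ' (x + t) - ψ' (x - t)‖ ≤ 2 * M * h := by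
      rintro t ⟨ht1, ht2⟩
      have := hlip (x + t) (hmem1 t ⟨ht1, ht2⟩) (x - t) (hmem2 t ⟨ht1, ht2⟩)
      rw [Real.norm_eq_abs]
      have habs : |x + t - (x - t)| = 2 * t := by
        rw [abs_of_nonneg (by linarith)]; ring
      rw [habs] at this
      nlinarith
    have hsecond : |g h - g 0| ≤ 2 * M * h * h := by
      have := Convex.norm_image_sub_le_of_norm_hasDerivWithin_le hg hgbound
        (convex_Icc _ _) (Set.left_mem_Icc.2 hh0.le) (Set.right_mem_Icc.2 hh0.le)
      simpa [Real.norm_eq_abs, abs_of_nonneg hh0.le] using this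
    -- identify a, b
    set a : ℝ := ψ ((k : ℝ) / L) - ψ ((n : ℝ) / L) with hadef
    set b : ℝ := ψ ((2 * (n : ℝ) - k) / L) - ψ ((n : ℝ) / L) with hbdef
    have hsumab : |a + b| ≤ 2 * M * h * h := by
      have hg0 : g 0 = 2 * ψ ((n : ℝ) / L) := by simp [hgdef, hxdef]; ring
      have hgh : g h = ψ ((2 * (n : ℝ) - k) / L) + ψ ((k : ℝ) / L) := by
        rw [hgdef]; simp only; rw [hxh1, hxh2]
      have : a + b = g h - g 0 := by rw [hadef, hbdef, hg0, hgh]; ring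
      rw [this]; exact hsecond
    -- spacing lower bounds
    have hspa : ((n : ℝ) - k) * n / (α * (L : ℝ) ^ 2) ≤ |a| := by
      have := hsp k n hkle (by omega) (by omega)
      refine le_trans ?_ this
      have habs : |(k : ℝ) ^ 2 - (n : ℝ) ^ 2| = (n : ℝ) ^ 2 - (k : ℝ) ^ 2 := by
        rw [abs_of_nonpos (by nlinarith)]; ring
      rw [habs]
      gcongr ?_ / _
      nlinarith
    have hspb : ((n : ℝ) - k) * (2 * n) / (α * (L : ℝ) ^ 2) ≤ |b| := by
      have := hsp (2 * n - k) n (by omega) (by omega) (by omega)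
      rw [hk2n] at this
      refine le_trans ?_ this
      have habs : |(2 * (n : ℝ) - k) ^ 2 - (n : ℝ) ^ 2| = (2 * (n : ℝ) - k) ^ 2 - (n : ℝ) ^ 2 := by
        rw [abs_of_nonneg (by nlinarith [mul_pos (show (0:ℝ) < (n:ℝ) - k by linarith) (show (0:ℝ) < 3 * (n:ℝ) - k by linarith)])]
      rw [habs]
      gcongr ?_ / _
      nlinarith
    have ha0 : a ≠ 0 := by
      intro hc
      rw [hc] at hspa
      simp only [abs_zero] at hspa
      have : (0:ℝ) < ((n : ℝ) - k) * n / (α * (L : ℝ) ^ 2) :=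
        div_pos (mul_pos (by linarith) hn0) (by positivity)
      linarith
    have hb0 : b ≠ 0 := by
      intro hc
      rw [hc] at hspb
      simp only [abs_zero] at hspb
      have : (0:ℝ) < ((n : ℝ) - k) * (2 * n) / (α * (L : ℝ) ^ 2) :=
        div_pos (mul_pos (by linarith) (by linarith)) (by positivity)
      linarith
    have hterm : 1 / a + 1 / b = (a + b) / (a * b) := by field_simp; ring
    rw [hk2n]
    show |1 / a + 1 / b| ≤ α ^ 2 * M * (L : ℝ) ^ 2 / (n : ℝ) ^ 2
    rw [hterm, abs_div, abs_mul]
    have hprod : 2 * (n : ℝ) ^ 2 * ((n : ℝ) - k) ^ 2 / (α ^ 2 * (L : ℝ) ^ 4) ≤ |a| * |b| := by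
      have := mul_le_mul hspa hspb
        (div_nonneg (mul_nonneg (by linarith) (by linarith)) (by positivity)) (abs_nonneg a)
      refine le_trans (le_of_eq ?_) this
      field_simp
    have hprod0 : (0 : ℝ) < 2 * (n : ℝ) ^ 2 * ((n : ℝ) - k) ^ 2 / (α ^ 2 * (L : ℝ) ^ 4) := by
      have : (0:ℝ) < (n : ℝ) - k := by linarith
      positivity
    calc |a + b| / (|a| * |b|)
        ≤ (2 * M * h * h) / (2 * (n : ℝ) ^ 2 * ((n : ℝ) - k) ^ 2 / (α ^ 2 * (L : ℝ) ^ 4)) :=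
          div_le_div₀ (by positivity) hsumab hprod0 hprod
      _ = α ^ 2 * M * (L : ℝ) ^ 2 / (n : ℝ) ^ 2 := by
          rw [hhdef]
          have hnk : (0:ℝ) < (n : ℝ) - k := by linarith
          field_simp
  -- sum up
  calc |∑ k ∈ Finset.range n,
          (1 / (ψ ((k : ℝ) / (L : ℝ)) - ψ ((n : ℝ) / (L : ℝ))) +
           1 / (ψ (((2 * n - k : ℕ) : ℝ) / (L : ℝ)) - ψ ((n : ℝ) / (L : ℝ))))|
      ≤ ∑ k ∈ Finset.range n,
          |1 / (ψ ((k : ℝ) / (L : ℝ)) - ψ ((n : ℝ) / (L : ℝ))) +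
           1 / (ψ (((2 * n - k : ℕ) : ℝ) / (L : ℝ)) - ψ ((n : ℝ) / (L : ℝ)))| :=
        Finset.abs_sum_le_sum_abs _ _
    _ ≤ ∑ _k ∈ Finset.range n, α ^ 2 * M * (L : ℝ) ^ 2 / (n : ℝ) ^ 2 :=
        Finset.sum_le_sum key
    _ = (n : ℝ) * (α ^ 2 * M * (L : ℝ) ^ 2 / (n : ℝ) ^ 2) := by
        rw [Finset.sum_const, Finset.card_range, nsmul_eq_mul]
    _ = α ^ 2 * M * (L : ℝ) ^ 2 / (n : ℝ) := by
        field_simp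
end

section
/- For all α ≥ 1 and C₀ ≥ 1 there exist C ≥ 1, ε₀ ∈ (0,1), and for each ε ∈ (0, ε₀) an L₀ = L₀(ε, α), such that the following holds. Let ε ∈ (0, ε₀), L ≥ L₀, K ≤ εL, N ≥ K, let E₀ ∈ ℝ, let (λ_k, a_k)_{0 ≤ k ≤ K} be near-boundary spectral data with constant α at E₀, and let (λ_k, a_k)_{K < k ≤ N} be far spectral data. Then for every integer n with 0 ≤ n < K and every E ∈ M_n := {x − iy : x ∈ [(λ_{n−1} + λ_n)/2, (λ_n + λ_{n+1})/2], y ∈ [0, C₀(n+1)/L²]} (with the convention λ_{−1} := 2(E₀ − ε) − λ₀), one has |Σ_{k=0, k≠n}^{N} a_k·(1/(λ_k − E) − 1/(λ_k − λ_n))| ≤ C·L·|E − λ_n|. -/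
open Finset

/-- Far spectral data (indices `K < k ≤ N`): eigenvalues at distance at least
`3αε²` from `E₀`, avoiding `[E₀ − 2ε, E₀]`, with nonnegative weights, together with
the normalization `Σ_{k=0}^N a k ≤ 1`. -/
def FarData (α ε : ℝ) (K N : ℕ) (E₀ : ℝ) (lam a : ℕ → ℝ) : Prop :=
  (∀ k : ℕ, K < k → k ≤ N → 3 * α * ε ^ 2 ≤ |lam k - E₀|) ∧
  (∀ k : ℕ, K < k → k ≤ N → lam k ∉ Set.Icc (E₀ - 2 * ε) E₀) ∧
  (∀ k : ℕ, K < k → k ≤ N → 0 ≤ a k) ∧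
  (∑ k ∈ Finset.range (N + 1), a k ≤ 1)

lemma nat_abs_one_le {a b : ℕ} (h : a ≠ b) : (1:ℝ) ≤ |(a:ℝ) - (b:ℝ)| := by
  rcases Nat.lt_or_ge a b with h' | h'
  · have h1 : (a:ℝ) + 1 ≤ b := by exact_mod_cast h'
    rw [abs_sub_comm, abs_of_nonneg (by linarith)]; linarith
  · have hb : b < a := lt_of_le_of_ne h' (Ne.symm h)
    have h1 : (b:ℝ) + 1 ≤ a := by exact_mod_cast hb
    rw [abs_of_nonneg (by linarith)]; linarith

lemma basel (m : ℕ) : ∑ j ∈ Finset.range m, (1:ℝ)/((j:ℝ)+1)^2 ≤ 2 - 2/((m:ℝ)+1) := by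
  induction m with
  | zero => simp
  | succ m ih =>
    rw [Finset.sum_range_succ]
    have hm : (0:ℝ) < (m:ℝ)+1 := by positivity
    have hm2 : (0:ℝ) < (m:ℝ)+2 := by positivity
    have key : 1/((m:ℝ)+1)^2 ≤ 2/((m:ℝ)+1) - 2/((m:ℝ)+2) := by
      rw [div_sub_div _ _ hm.ne' hm2.ne', div_le_div_iff₀ (by positivity) (by positivity)]
      nlinarith [hm, hm2]
    have hc : ((m:ℕ)+1 : ℝ) + 1 = (m:ℝ) + 2 := by push_cast; ring
    push_cast
    rw [hc]
    linarith

lemma sum_inv_sq_erase (n K : ℕ) (hn : n ≤ K) :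
    ∑ k ∈ (Finset.range (K+1)).erase n, (1:ℝ)/((k:ℝ)-(n:ℝ))^2 ≤ 4 := by
  have hsplit : (Finset.range (K+1)).erase n = Finset.range n ∪ Finset.Icc (n+1) K := by
    ext k; simp only [Finset.mem_erase, Finset.mem_range, Finset.mem_union, Finset.mem_Icc]; omega
  have hdisj : Disjoint (Finset.range n) (Finset.Icc (n+1) K) := by
    rw [Finset.disjoint_left]; intro a ha hb
    simp only [Finset.mem_range] at ha; simp only [Finset.mem_Icc] at hb; omega
  rw [hsplit, Finset.sum_union hdisj]
  have h1 : ∑ k ∈ Finset.range n, (1:ℝ)/((k:ℝ)-(n:ℝ))^2 ≤ 2 := by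
    have e : ∑ k ∈ Finset.range n, (1:ℝ)/((k:ℝ)-(n:ℝ))^2 = ∑ j ∈ Finset.range n, (1:ℝ)/((j:ℝ)+1)^2 := by
      rw [← Finset.sum_range_reflect (fun k => (1:ℝ)/((k:ℝ)-(n:ℝ))^2) n]
      apply Finset.sum_congr rfl
      intro j hj
      simp only [Finset.mem_range] at hj
      have hc : ((n - 1 - j : ℕ) : ℝ) = (n:ℝ) - 1 - (j:ℝ) := by
        have h' : n - 1 - j = n - (1 + j) := by omega
        rw [h', Nat.cast_sub (by omega)]; push_cast; ring
      rw [hc]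
      have h'' : (n:ℝ) - 1 - (j:ℝ) - (n:ℝ) = -((j:ℝ)+1) := by ring
      rw [h'', neg_pow]
      simp
    rw [e]
    have := basel n
    have h2 : (0:ℝ) ≤ 2/((n:ℝ)+1) := by positivity
    linarith
  have h2 : ∑ k ∈ Finset.Icc (n+1) K, (1:ℝ)/((k:ℝ)-(n:ℝ))^2 ≤ 2 := by
    have e : ∑ k ∈ Finset.Icc (n+1) K, (1:ℝ)/((k:ℝ)-(n:ℝ))^2 = ∑ i ∈ Finset.range (K - n), (1:ℝ)/((i:ℝ)+1)^2 := by
      rw [← Finset.Ico_add_one_right_eq_Icc, Finset.sum_Ico_eq_sum_range]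
      have h' : K + 1 - (n+1) = K - n := by omega
      rw [h']
      apply Finset.sum_congr rfl
      intro i _
      push_cast
      ring_nf
    rw [e]
    have := basel (K - n)
    have h4 : (0:ℝ) ≤ 2/((((K-n:ℕ)):ℝ)+1) := by positivity
    linarith
  linarith

lemma abs_term (ak : ℝ) (ha : 0 ≤ ak) (u v w : ℂ) (hu : u ≠ 0) (hv : v ≠ 0) (hw : v - u = w) :
    ‖(ak:ℂ)/u - (ak:ℂ)/v‖ = ak * ‖w‖ / (‖u‖ * ‖v‖) := by
  have h : (ak:ℂ)/u - (ak:ℂ)/v = (ak:ℂ) * w / (u*v) := by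
    rw [← hw]; field_simp
  rw [h, norm_div, norm_mul, norm_mul, Complex.norm_real, Real.norm_eq_abs, abs_of_nonneg ha]

set_option maxHeartbeats 2000000 in
/-- Lemma 5.2: on the box `M_n` around `λ_n` (convention `λ_{−1} := 2(E₀−ε) − λ₀`),
the resonance-equation sum with the `n`-th term removed differs from its value at
`λ_n` by at most `C·L·|E − λ_n|`. -/
theorem stmt8 (α C₀ : ℝ) (hα : 1 ≤ α) (hC₀ : 1 ≤ C₀) :
    ∃ C ε₀ : ℝ, 1 ≤ C ∧ 0 < ε₀ ∧ ε₀ < 1 ∧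
    ∀ ε : ℝ, 0 < ε → ε < ε₀ →
    ∃ L₀ : ℕ, ∀ (L K N : ℕ) (E₀ : ℝ) (lam a : ℕ → ℝ),
      L₀ ≤ L → (K : ℝ) ≤ ε * L → K ≤ N →
      NearBoundaryData α L K E₀ lam a →
      FarData α ε K N E₀ lam a →
      ∀ n : ℕ, n < K →
      ∀ E : ℂ,
        ((if n = 0 then 2 * (E₀ - ε) - lam 0 else lam (n - 1)) + lam n) / 2 ≤ E.re →
        E.re ≤ (lam n + lam (n + 1)) / 2 →
        -(C₀ * ((n : ℝ) + 1) / (L : ℝ) ^ 2) ≤ E.im → E.im ≤ 0 →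
        ‖∑ k ∈ (Finset.range (N + 1)).erase n,
            ((a k : ℂ) / ((lam k : ℂ) - E) - (a k : ℂ) / ((lam k : ℂ) - (lam n : ℂ)))‖ ≤
          C * (L : ℝ) * ‖E - (lam n : ℂ)‖ := by
  refine ⟨33*α^3, 1/2, by nlinarith [pow_le_pow_left₀ (zero_le_one) hα 3], by norm_num, by norm_num, ?_⟩
  intro ε hε hεhalf
  refine ⟨⌈2/ε + 1/ε^4⌉₊, ?_⟩
  intro L K N E₀ lam a hL hKL hKN hNB hFD n hn E h1 h2 h3 h4
  obtain ⟨hmono, hloc, hsep, hapos, habd⟩ := hNB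
  obtain ⟨hf1, hf2, hf3, hfsum⟩ := hFD
  have hε1 : ε < 1 := by linarith
  have hαpos : (0:ℝ) < α := by linarith
  have hLr : 2/ε + 1/ε^4 ≤ (L:ℝ) := (Nat.le_ceil _).trans (Nat.cast_le.mpr hL)
  have hinv1 : (0:ℝ) < 2/ε := by positivity
  have hinv2 : (0:ℝ) < 1/ε^4 := by positivity
  have hLpos : (0:ℝ) < L := by linarith
  have hL2e : 2/ε ≤ (L:ℝ) := by linarith
  have he4L : 1/ε^4 ≤ (L:ℝ) := by linarith
  have hεL : 2 ≤ ε * (L:ℝ) := by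
    rw [div_le_iff₀ hε] at hL2e; linarith
  have hKe : (K:ℝ) + 1 ≤ (3/2)*(ε*(L:ℝ)) := by linarith
  have hnK : n + 1 ≤ K := hn
  set x := E.re with hx
  have hE0lt : ∀ k, k ≤ K → E₀ < lam k := by
    intro k hk
    have h := (hloc k hk).1
    have hp : 0 < ((k:ℝ)+1)^2/(α*(L:ℝ)^2) := by positivity
    linarith
  have hgap : ∀ k, k ≤ K → lam k - E₀ ≤ α*((K:ℝ)+1)^2/(L:ℝ)^2 := by
    intro k hk
    have h := (hloc k hk).2
    have hkc : ((k:ℝ)+1) ≤ (K:ℝ)+1 := by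
      have : (k:ℝ) ≤ K := Nat.cast_le.mpr hk; linarith
    have hnn : (0:ℝ) ≤ (k:ℝ)+1 := by positivity
    calc lam k - E₀ ≤ α*((k:ℝ)+1)^2/(L:ℝ)^2 := h
      _ ≤ α*((K:ℝ)+1)^2/(L:ℝ)^2 := by gcongr
  have hK94 : α*((K:ℝ)+1)^2/(L:ℝ)^2 ≤ (9/4)*α*ε^2 := by
    rw [div_le_iff₀ (by positivity)]
    have hsq : ((K:ℝ)+1)^2 ≤ (9/4)*(ε*(L:ℝ))^2 := by
      nlinarith only [hKe, (by positivity : (0:ℝ) ≤ (K:ℝ)+1)]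
    linarith only [mul_le_mul_of_nonneg_left hsq hαpos.le]
  have hlamnup : lam n - E₀ ≤ α*ε^2 := by
    have h := (hloc n (le_of_lt hn)).2
    have hc : (n:ℝ)+1 ≤ ε*(L:ℝ) := by
      have : ((n:ℝ)+1) ≤ (K:ℝ) := by exact_mod_cast hnK
      linarith
    calc lam n - E₀ ≤ α*((n:ℝ)+1)^2/(L:ℝ)^2 := h
      _ ≤ α*ε^2 := by
        rw [div_le_iff₀ (by positivity)]
        have hsq : ((n:ℝ)+1)^2 ≤ (ε*(L:ℝ))^2 := by
          nlinarith only [hc, (by positivity : (0:ℝ) ≤ (n:ℝ)+1)]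
        linarith only [mul_le_mul_of_nonneg_left hsq hαpos.le]
  have hxup : x ≤ E₀ + (9/4)*α*ε^2 := by
    have h5 : lam n < lam (n+1) := hmono n (n+1) (by omega) hnK
    have h6 := hgap (n+1) hnK
    linarith [h2, hK94]
  have hxlow : E₀ - ε ≤ x := by
    by_cases h0 : n = 0
    · subst h0; rw [if_pos rfl] at h1; linarith
    · rw [if_neg h0] at h1
      have ha1 := hE0lt (n-1) (by omega)
      have ha2 := hE0lt n (le_of_lt hn)
      linarith
  have hDnn : (0:ℝ) ≤ ‖E - (lam n:ℂ)‖ := norm_nonneg _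
  set D := ‖E - (lam n:ℂ)‖ with hD
  -- near-boundary per-term bound
  have hnear : ∀ k ∈ (Finset.range (K+1)).erase n,
      ‖(a k:ℂ)/((lam k:ℂ) - E) - (a k:ℂ)/((lam k:ℂ) - (lam n:ℂ))‖
        ≤ 8*α^3*(L:ℝ)/((k:ℝ)-(n:ℝ))^2 * D := by
    intro k hk
    rw [Finset.mem_erase, Finset.mem_range] at hk
    obtain ⟨hkn, hkK'⟩ := hk
    have hkK : k ≤ K := by omega
    set A : ℝ := |(k:ℝ)^2 - (n:ℝ)^2| with hA
    have hA1 : (1:ℝ) ≤ A := by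
      have hne : k^2 ≠ n^2 := by
        rcases Nat.lt_or_ge k n with h' | h'
        · exact ne_of_lt (Nat.pow_lt_pow_left h' (by norm_num))
        · have : n < k := lt_of_le_of_ne h' (Ne.symm hkn)
          exact ne_of_gt (Nat.pow_lt_pow_left this (by norm_num))
      have h := nat_abs_one_le hne
      push_cast at h
      rw [hA]; exact h
    have hA0 : (0:ℝ) < A := by linarith
    have hsep' : A/(α*(L:ℝ)^2) ≤ |lam k - lam n| := hsep k hkK n (le_of_lt hn) hkn
    have hux : |lam k - lam n|/2 ≤ |lam k - x| := by
      rcases Nat.lt_or_ge k n with hlt | hge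
      · have h0 : n ≠ 0 := by omega
        rw [if_neg h0] at h1
        have hk1 : lam k ≤ lam (n-1) := by
          rcases Nat.lt_or_ge k (n-1) with h' | h'
          · exact le_of_lt (hmono k (n-1) h' (by omega))
          · have he : k = n-1 := by omega
            rw [he]
        have hkln : lam k < lam n := hmono k n hlt (le_of_lt hn)
        rw [abs_of_neg (by linarith : lam k - lam n < 0),
            abs_of_nonpos (by linarith : lam k - x ≤ 0)]
        linarith
      · have hgt : n < k := lt_of_le_of_ne hge (Ne.symm hkn)
        have hk1 : lam (n+1) ≤ lam k := by
          rcases Nat.lt_or_ge (n+1) k with h' | h'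
          · exact le_of_lt (hmono (n+1) k h' hkK)
          · have he : k = n+1 := by omega
            rw [he]
        have hnn1 : lam n < lam (n+1) := hmono n (n+1) (by omega) hnK
        rw [abs_of_pos (by linarith : 0 < lam k - lam n),
            abs_of_nonneg (by linarith : 0 ≤ lam k - x)]
        linarith
    have hre : |lam k - x| ≤ ‖(lam k:ℂ) - E‖ := by
      have h := Complex.abs_re_le_norm ((lam k:ℂ) - E)
      simpa [Complex.sub_re, hx] using h
    have huabs : A/(2*α*(L:ℝ)^2) ≤ ‖(lam k:ℂ) - E‖ := by
      have hh : A/(2*α*(L:ℝ)^2) ≤ |lam k - lam n|/2 := by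
        have he : A/(2*α*(L:ℝ)^2) = (A/(α*(L:ℝ)^2))/2 := by ring
        rw [he]; linarith
      linarith
    have hvabs : A/(α*(L:ℝ)^2) ≤ ‖(lam k:ℂ) - (lam n:ℂ)‖ := by
      rw [← Complex.ofReal_sub, Complex.norm_real, Real.norm_eq_abs]; exact hsep'
    have hu0 : ((lam k:ℂ) - E) ≠ 0 := by
      intro h; rw [h, norm_zero] at huabs
      have : (0:ℝ) < A/(2*α*(L:ℝ)^2) := div_pos hA0 (by positivity)
      linarith
    have hv0 : ((lam k:ℂ) - (lam n:ℂ)) ≠ 0 := by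
      intro h; rw [h, norm_zero] at hvabs
      have : (0:ℝ) < A/(α*(L:ℝ)^2) := div_pos hA0 (by positivity)
      linarith
    rw [abs_term (a k) (hapos k hkK) _ _ (E - (lam n:ℂ)) hu0 hv0 (by ring), ← hD]
    have hd1 : (0:ℝ) < A/(2*α*(L:ℝ)^2) := div_pos hA0 (by positivity)
    have hd2 : (0:ℝ) < A/(α*(L:ℝ)^2) := div_pos hA0 (by positivity)
    have key1 : a k * D / (‖(lam k:ℂ) - E‖ * ‖(lam k:ℂ) - (lam n:ℂ)‖)
        ≤ (α*((k:ℝ)+1)^2/(L:ℝ)^3) * D / ((A/(2*α*(L:ℝ)^2)) * (A/(α*(L:ℝ)^2))) := by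
      apply div_le_div₀ (by positivity)
      · exact mul_le_mul_of_nonneg_right (habd k hkK) hDnn
      · exact mul_pos hd1 hd2
      · exact mul_le_mul huabs hvabs hd2.le (norm_nonneg _)
    have key2 : (α*((k:ℝ)+1)^2/(L:ℝ)^3) * D / ((A/(2*α*(L:ℝ)^2)) * (A/(α*(L:ℝ)^2)))
        = (2*α^3*(L:ℝ)*((k:ℝ)+1)^2/A^2) * D := by
      field_simp
    have hs0 : (0:ℝ) < ((k:ℝ)-(n:ℝ))^2 := by
      have hne : (k:ℝ) ≠ (n:ℝ) := by exact_mod_cast hkn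
      exact sq_pos_of_ne_zero (sub_ne_zero.mpr hne)
    have key3 : (2*α^3*(L:ℝ)*((k:ℝ)+1)^2/A^2) * D ≤ 8*α^3*(L:ℝ)/((k:ℝ)-(n:ℝ))^2 * D := by
      apply mul_le_mul_of_nonneg_right _ hDnn
      have hsq : A^2 = ((k:ℝ)-(n:ℝ))^2 * ((k:ℝ)+(n:ℝ))^2 := by
        rw [hA, sq_abs]; ring
      have hkn2 : (k:ℝ)+1 ≤ 2*((k:ℝ)+(n:ℝ)) := by
        have h' : 1 ≤ k + 2*n := by omega
        have h'' : (1:ℝ) ≤ (k:ℝ) + 2*(n:ℝ) := by exact_mod_cast h'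
        linarith
      have hP : (0:ℝ) ≤ 4*((k:ℝ)+(n:ℝ))^2 - ((k:ℝ)+1)^2 := by
        nlinarith only [mul_nonneg (sub_nonneg.mpr hkn2)
          (by positivity : (0:ℝ) ≤ 2*((k:ℝ)+(n:ℝ)) + ((k:ℝ)+1))]
      rw [div_le_div_iff₀ (by positivity) hs0, hsq]
      nlinarith only [mul_nonneg (mul_nonneg (by positivity : (0:ℝ) ≤ 2*α^3*(L:ℝ)) hs0.le) hP]
    calc a k * D / (‖(lam k:ℂ) - E‖ * ‖(lam k:ℂ) - (lam n:ℂ)‖)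
        ≤ (α*((k:ℝ)+1)^2/(L:ℝ)^3) * D / ((A/(2*α*(L:ℝ)^2)) * (A/(α*(L:ℝ)^2))) := key1
      _ = (2*α^3*(L:ℝ)*((k:ℝ)+1)^2/A^2) * D := key2
      _ ≤ 8*α^3*(L:ℝ)/((k:ℝ)-(n:ℝ))^2 * D := key3
  -- far per-term bound
  have hfarb : ∀ k ∈ Finset.Ico (K+1) (N+1),
      ‖(a k:ℂ)/((lam k:ℂ) - E) - (a k:ℂ)/((lam k:ℂ) - (lam n:ℂ))‖
        ≤ (2/(3*ε^4)*a k) * D := by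
    intro k hk
    rw [Finset.mem_Ico] at hk
    obtain ⟨hk1, hk2⟩ := hk
    have hkK : K < k := hk1
    have hkN : k ≤ N := by omega
    have hak := hf3 k hkK hkN
    have hE0n : E₀ < lam n := hE0lt n (le_of_lt hn)
    have hlamnlow : 0 < lam n - E₀ := by linarith
    have hcases : (3*α*ε^2 ≤ lam k - E₀) ∨ (lam k < E₀ - 2*ε) := by
      rcases le_or_gt E₀ (lam k) with hc | hc
      · left
        have h := hf1 k hkK hkN
        rwa [abs_of_nonneg (by linarith)] at h
      · right
        have h := hf2 k hkK hkN
        simp only [Set.mem_Icc, not_and, not_le] at h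
        by_contra hcon
        push_neg at hcon
        have := h hcon
        linarith
    have hεsq : ε^2 ≤ ε := by
      nlinarith only [mul_nonneg hε.le (sub_nonneg.mpr hε1.le)]
    have hvR : 2*ε^2 ≤ |lam k - lam n| := by
      rcases hcases with hc | hc
      · have hαε : (0:ℝ) ≤ (α-1)*ε^2 := by
          apply mul_nonneg (by linarith) (sq_nonneg ε)
        rw [abs_of_nonneg (by linarith only [hc, hlamnup, hαε, sq_nonneg ε] : 0 ≤ lam k - lam n)]
        linarith only [hc, hlamnup, hαε, sq_nonneg ε]
      · rw [abs_of_nonpos (by linarith only [hE0n, hc, hε] : lam k - lam n ≤ 0)]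
        linarith only [hE0n, hc, hεsq]
    have huR : (3/4)*ε^2 ≤ |lam k - x| := by
      rcases hcases with hc | hc
      · have hαε : (0:ℝ) ≤ (α-1)*ε^2 := by
          apply mul_nonneg (by linarith) (sq_nonneg ε)
        rw [abs_of_nonneg (by linarith only [hc, hxup, hαε, sq_nonneg ε] : 0 ≤ lam k - x)]
        linarith only [hc, hxup, hαε, sq_nonneg ε]
      · rw [abs_of_nonpos (by linarith only [hxlow, hc, hε] : lam k - x ≤ 0)]
        linarith only [hxlow, hc, hεsq, sq_nonneg ε]
    have hre : |lam k - x| ≤ ‖(lam k:ℂ) - E‖ := by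
      have h := Complex.abs_re_le_norm ((lam k:ℂ) - E)
      simpa [Complex.sub_re, hx] using h
    have huabs : (3/4)*ε^2 ≤ ‖(lam k:ℂ) - E‖ := by linarith
    have hvabs : 2*ε^2 ≤ ‖(lam k:ℂ) - (lam n:ℂ)‖ := by
      rw [← Complex.ofReal_sub, Complex.norm_real, Real.norm_eq_abs]; exact hvR
    have hu0 : ((lam k:ℂ) - E) ≠ 0 := by
      intro h; rw [h, norm_zero] at huabs; linarith only [huabs, mul_pos hε hε]
    have hv0 : ((lam k:ℂ) - (lam n:ℂ)) ≠ 0 := by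
      intro h; rw [h, norm_zero] at hvabs; linarith only [hvabs, mul_pos hε hε]
    rw [abs_term (a k) hak _ _ (E - (lam n:ℂ)) hu0 hv0 (by ring), ← hD]
    have key1 : a k * D / (‖(lam k:ℂ) - E‖ * ‖(lam k:ℂ) - (lam n:ℂ)‖)
        ≤ a k * D / (((3/4)*ε^2) * (2*ε^2)) := by
      apply div_le_div₀ (mul_nonneg hak hDnn) (le_refl _) (by positivity)
      exact mul_le_mul huabs hvabs (by positivity) (norm_nonneg _)
    have key2 : a k * D / (((3/4)*ε^2) * (2*ε^2)) = (2/(3*ε^4)*a k) * D := by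
      field_simp
      ring
    calc a k * D / (‖(lam k:ℂ) - E‖ * ‖(lam k:ℂ) - (lam n:ℂ)‖)
        ≤ a k * D / (((3/4)*ε^2) * (2*ε^2)) := key1
      _ = (2/(3*ε^4)*a k) * D := key2
  -- assemble
  have hsplitset : (Finset.range (N+1)).erase n
      = ((Finset.range (K+1)).erase n) ∪ Finset.Ico (K+1) (N+1) := by
    ext k
    simp only [Finset.mem_erase, Finset.mem_union, Finset.mem_range, Finset.mem_Ico]
    omega
  have hdisj : Disjoint ((Finset.range (K+1)).erase n) (Finset.Ico (K+1) (N+1)) := by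
    rw [Finset.disjoint_left]
    intro b hb hb'
    simp only [Finset.mem_erase, Finset.mem_range] at hb
    simp only [Finset.mem_Ico] at hb'
    omega
  have part1 : ∑ k ∈ (Finset.range (K+1)).erase n, 8*α^3*(L:ℝ)/((k:ℝ)-(n:ℝ))^2 * D
      ≤ 32*α^3*(L:ℝ)*D := by
    have e1 : ∑ k ∈ (Finset.range (K+1)).erase n, 8*α^3*(L:ℝ)/((k:ℝ)-(n:ℝ))^2 * D
        = (8*α^3*(L:ℝ)*D) * ∑ k ∈ (Finset.range (K+1)).erase n, (1:ℝ)/((k:ℝ)-(n:ℝ))^2 := by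
      rw [Finset.mul_sum]
      exact Finset.sum_congr rfl (fun k _ => by ring)
    rw [e1]
    have hs := sum_inv_sq_erase n K (le_of_lt hn)
    have hnn : (0:ℝ) ≤ 8*α^3*(L:ℝ)*D :=
      mul_nonneg (by positivity) hDnn
    calc (8*α^3*(L:ℝ)*D) * ∑ k ∈ (Finset.range (K+1)).erase n, (1:ℝ)/((k:ℝ)-(n:ℝ))^2
        ≤ (8*α^3*(L:ℝ)*D) * 4 := mul_le_mul_of_nonneg_left hs hnn
      _ = 32*α^3*(L:ℝ)*D := by ring
  have part2 : ∑ k ∈ Finset.Ico (K+1) (N+1), (2/(3*ε^4)*a k) * D ≤ α^3*(L:ℝ)*D := by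
    have hsub : Finset.Ico (K+1) (N+1) ⊆ Finset.range (N+1) := by
      intro i hi
      simp only [Finset.mem_Ico] at hi
      simp only [Finset.mem_range]
      omega
    have hSa : ∑ k ∈ Finset.Ico (K+1) (N+1), a k ≤ 1 := by
      refine le_trans (Finset.sum_le_sum_of_subset_of_nonneg hsub ?_) hfsum
      intro i hi hni
      simp only [Finset.mem_range] at hi
      rcases le_or_gt i K with h | h
      · exact hapos i h
      · exact hf3 i h (by omega)
    have e2 : ∑ k ∈ Finset.Ico (K+1) (N+1), (2/(3*ε^4)*a k) * D
        = (2/(3*ε^4)*D) * ∑ k ∈ Finset.Ico (K+1) (N+1), a k := by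
      rw [Finset.mul_sum]
      exact Finset.sum_congr rfl (fun k _ => by ring)
    rw [e2]
    have h23 : 2/(3*ε^4) ≤ α^3*(L:ℝ) := by
      have ha3 : (1:ℝ) ≤ α^3 := by
        linarith only [pow_le_pow_left₀ zero_le_one hα 3]
      have hL' : 2/(3*ε^4) ≤ (L:ℝ) := by
        have he : 2/(3*ε^4) = (2/3)*(1/ε^4) := by ring
        rw [he]
        linarith only [he4L, hinv2]
      nlinarith only [hL', ha3, hLpos]
    calc (2/(3*ε^4)*D) * ∑ k ∈ Finset.Ico (K+1) (N+1), a k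
        ≤ (2/(3*ε^4)*D) * 1 := by
          apply mul_le_mul_of_nonneg_left hSa (mul_nonneg (by positivity) hDnn)
      _ = 2/(3*ε^4)*D := mul_one _
      _ ≤ α^3*(L:ℝ)*D := mul_le_mul_of_nonneg_right h23 hDnn
  calc ‖∑ k ∈ (Finset.range (N + 1)).erase n,
          ((a k : ℂ) / ((lam k : ℂ) - E) - (a k : ℂ) / ((lam k : ℂ) - (lam n : ℂ)))‖
      ≤ ∑ k ∈ (Finset.range (N + 1)).erase n,
          ‖(a k : ℂ) / ((lam k : ℂ) - E) - (a k : ℂ) / ((lam k : ℂ) - (lam n : ℂ))‖ :=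
        norm_sum_le _ _
    _ = (∑ k ∈ (Finset.range (K+1)).erase n,
          ‖(a k : ℂ) / ((lam k : ℂ) - E) - (a k : ℂ) / ((lam k : ℂ) - (lam n : ℂ))‖)
        + ∑ k ∈ Finset.Ico (K+1) (N+1),
          ‖(a k : ℂ) / ((lam k : ℂ) - E) - (a k : ℂ) / ((lam k : ℂ) - (lam n : ℂ))‖ := by
        rw [hsplitset, Finset.sum_union hdisj]
    _ ≤ (∑ k ∈ (Finset.range (K+1)).erase n, 8*α^3*(L:ℝ)/((k:ℝ)-(n:ℝ))^2 * D)
        + ∑ k ∈ Finset.Ico (K+1) (N+1), (2/(3*ε^4)*a k) * D :=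
        add_le_add (Finset.sum_le_sum hnear) (Finset.sum_le_sum hfarb)
    _ ≤ 32*α^3*(L:ℝ)*D + α^3*(L:ℝ)*D := add_le_add part1 part2
    _ = 33*α^3*(L:ℝ)*D := by ring
end

section
/- For all α ≥ 1 and κ ∈ (0, 2) there exist ε₀ ∈ (0,1) and for each ε ∈ (0, ε₀) an L₀ = L₀(ε, α, κ), such that the following holds. Let ε ∈ (0, ε₀), L ≥ L₀, let K be an integer with εL/2 ≤ K ≤ εL, N ≥ K, let E₀ ∈ [−2 + κ, 2 − κ], let (λ_k, a_k)_{0 ≤ k ≤ K} be near-boundary spectral data with constant α at E₀ satisfying in addition (iii') (k+1)²/(αL³) ≤ a_k ≤ α(k+1)²/L³ for 0 ≤ k ≤ K, and let (λ_k, a_k)_{K < k ≤ N} be far spectral data. Then there is no z ∈ ℂ with Re z ∈ [E₀ − ε, E₀], Im z ∈ [−ε⁵, 0], z ∉ {λ_0, …, λ_N}, and Σ_{k=0}^{N} a_k/(λ_k − z) + w(z) = 0. -/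
open Finset

/-- `w z = (z + i (4 − z²)^{1/2})/2`, the analytic continuation from the upper
half-plane of `E ↦ e^{−iθ(E)}` where `E = 2 cos θ(E)`; `(·)^{1/2}` is the principal
branch of the complex square root. -/
noncomputable def w (z : ℂ) : ℂ := (z + Complex.I * (4 - z ^ 2) ^ ((1 : ℂ) / 2)) / 2

lemma term_im (a l : ℝ) (z : ℂ) :
    ((a:ℂ)/((l:ℂ) - z)).im = a * z.im / ((l - z.re)^2 + z.im^2) := by
  rw [Complex.div_im]
  simp [Complex.normSq_apply]
  ring

lemma sqrt_re_le_re_cpow_half (u : ℂ) : Real.sqrt u.re ≤ (u ^ ((1:ℂ)/2)).re := by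
  rw [show ((1:ℂ)/2) = (2⁻¹:ℂ) by norm_num, Complex.cpow_inv_two_re]
  apply Real.sqrt_le_sqrt
  have := Complex.re_le_norm u
  linarith

set_option maxHeartbeats 4000000 in
/-- Theorem 1.2: a resonance-free rectangle `[E₀ − ε, E₀] × [−ε⁵, 0]` just outside
the band edge `E₀`. -/
theorem stmt13 (α κ : ℝ) (hα : 1 ≤ α) (hκ0 : 0 < κ) (hκ2 : κ < 2) :
    ∃ ε₀ : ℝ, 0 < ε₀ ∧ ε₀ < 1 ∧
    ∀ ε : ℝ, 0 < ε → ε < ε₀ →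
    ∃ L₀ : ℕ, ∀ (L K N : ℕ) (E₀ : ℝ) (lam a : ℕ → ℝ),
      L₀ ≤ L → ε * L / 2 ≤ (K : ℝ) → (K : ℝ) ≤ ε * L → K ≤ N →
      E₀ ∈ Set.Icc (-2 + κ) (2 - κ) →
      NearBoundaryData α L K E₀ lam a →
      (∀ k ≤ K, ((k : ℝ) + 1) ^ 2 / (α * (L : ℝ) ^ 3) ≤ a k) →
      FarData α ε K N E₀ lam a →
      ¬ ∃ z : ℂ,
        (E₀ - ε ≤ z.re ∧ z.re ≤ E₀ ∧ -(ε ^ 5) ≤ z.im ∧ z.im ≤ 0) ∧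
        (∀ k ≤ N, z ≠ (lam k : ℂ)) ∧
        (∑ k ∈ Finset.range (N + 1), (a k : ℂ) / ((lam k : ℂ) - z)) + w z = 0 := by
  have hsκ : 0 < Real.sqrt κ := Real.sqrt_pos.mpr hκ0
  have hCpos : (0:ℝ) < 2*α^2 + 3 := by nlinarith
  refine ⟨min (min (1/2) (κ/2)) (Real.sqrt κ / (2*α^2+3)), ?_, ?_, ?_⟩
  · apply lt_min (lt_min (by norm_num) (by linarith)) (by positivity)
  · exact lt_of_le_of_lt (le_trans (min_le_left _ _) (min_le_left _ _)) (by norm_num)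
  intro ε hε hεε₀
  have hε1 : ε < 1/2 := lt_of_lt_of_le hεε₀ (le_trans (min_le_left _ _) (min_le_left _ _))
  have hεκ : ε < κ/2 := lt_of_lt_of_le hεε₀ (le_trans (min_le_left _ _) (min_le_right _ _))
  have hεC : ε < Real.sqrt κ / (2*α^2+3) := lt_of_lt_of_le hεε₀ (min_le_right _ _)
  refine ⟨⌈1/ε⌉₊, ?_⟩
  intro L K N E₀ lam a hL hK1 hK2 hKN hE₀ hnear hlow hfar
  rintro ⟨z, ⟨hre1, hre2, him1, him2⟩, hne, heq⟩
  obtain ⟨-, hnear2, -, hnear4, hnear5⟩ := hnear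
  obtain ⟨hfar1, hfar2, hfar3, hfar4⟩ := hfar
  obtain ⟨hE₀1, hE₀2⟩ := hE₀
  have hLε : (1:ℝ)/ε ≤ L := le_trans (Nat.le_ceil _) (Nat.cast_le.mpr hL)
  have hLpos : (0:ℝ) < L := lt_of_lt_of_le (by positivity) hLε
  have hεL : 1 ≤ ε * L := by
    rw [div_le_iff₀ hε] at hLε
    linarith [hLε]
  set t : ℝ := -z.im with ht
  have ht0 : 0 ≤ t := by simp [ht]; linarith
  have htε : t ≤ ε^5 := by simp [ht]; linarith
  have hε5 : ε^5 ≤ ε := by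
    calc ε^5 ≤ ε^1 := pow_le_pow_of_le_one hε.le (by linarith) (by norm_num)
      _ = ε := pow_one ε
  -- near-boundary terms
  have hnearbd : ∀ k ∈ Finset.range (K+1),
      |((a k:ℂ)/((lam k:ℂ) - z)).im| ≤ α^2/(2*L) := by
    intro k hk
    rw [Finset.mem_range_succ_iff] at hk
    rw [term_im]
    set d : ℝ := lam k - z.re with hdd
    have hd : ((k:ℝ)+1)^2/(α*(L:ℝ)^2) ≤ d := by
      have := (hnear2 k hk).1
      simp only [hdd]
      linarith
    have hdpos : 0 < d := lt_of_lt_of_le (by positivity) hd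
    have hD : 0 < d^2 + z.im^2 := by positivity
    have ha1 : 0 ≤ a k := hnear4 k hk
    have ha2 : a k ≤ α*((k:ℝ)+1)^2/(L:ℝ)^3 := hnear5 k hk
    have habs : |a k * z.im| = a k * t := by
      rw [abs_mul, abs_of_nonneg ha1, abs_of_nonpos him2]
    rw [abs_div, habs, abs_of_pos hD, div_le_div_iff₀ hD (by positivity : (0:ℝ) < 2*L)]
    have h2 : a k * (L:ℝ)^3 ≤ α * ((k:ℝ)+1)^2 := by
      rw [← le_div_iff₀ (by positivity : (0:ℝ) < (L:ℝ)^3)]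
      exact ha2
    have h3 : ((k:ℝ)+1)^2 ≤ α * (L:ℝ)^2 * d := by
      have := (div_le_iff₀ (by positivity : (0:ℝ) < α*(L:ℝ)^2)).mp hd
      linarith
    have h4 : a k * L ≤ α^2 * d := by
      have h3' : α * ((k:ℝ)+1)^2 ≤ α * (α * (L:ℝ)^2 * d) :=
        mul_le_mul_of_nonneg_left h3 (by linarith : (0:ℝ) ≤ α)
      have h4' : a k * (L:ℝ) * (L:ℝ)^2 ≤ α^2 * d * (L:ℝ)^2 := by nlinarith [h2, h3']
      exact le_of_mul_le_mul_right h4' (by positivity)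
    have h5 : 2*d*t ≤ d^2 + t^2 := by nlinarith [sq_nonneg (d - t)]
    have h6 : z.im^2 = t^2 := by simp [ht]
    have hA : 2*t*(a k * L) ≤ 2*t*(α^2*d) :=
      mul_le_mul_of_nonneg_left h4 (by linarith : (0:ℝ) ≤ 2*t)
    have hB : α^2*(2*d*t) ≤ α^2*(d^2+t^2) :=
      mul_le_mul_of_nonneg_left h5 (by positivity : (0:ℝ) ≤ α^2)
    rw [h6]
    nlinarith [hA, hB]
  -- far terms
  have hfarbd : ∀ k ∈ Finset.Ico (K+1) (N+1),
      |((a k:ℂ)/((lam k:ℂ) - z)).im| ≤ a k * ε := by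
    intro k hk
    rw [Finset.mem_Ico] at hk
    have hKk : K < k := hk.1
    have hkN : k ≤ N := by omega
    have ha1 : 0 ≤ a k := hfar3 k hKk hkN
    have hd4 : ε^4 ≤ (lam k - z.re)^2 := by
      have h2 := hfar2 k hKk hkN
      rw [Set.mem_Icc] at h2
      push_neg at h2
      by_cases hcase : E₀ - 2*ε ≤ lam k
      · have hgt : E₀ < lam k := h2 hcase
        have h1 := hfar1 k hKk hkN
        rw [abs_of_pos (by linarith)] at h1
        have hx : ε^2 ≤ lam k - z.re := by nlinarith
        nlinarith [sq_nonneg ε]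
      · push_neg at hcase
        have hx : ε^2 ≤ z.re - lam k := by nlinarith
        nlinarith [sq_nonneg ε]
    have hD : 0 < (lam k - z.re)^2 + z.im^2 := by
      nlinarith [pow_pos hε 4, sq_nonneg z.im, hd4]
    rw [term_im]
    have habs : |a k * z.im| = a k * t := by
      rw [abs_mul, abs_of_nonneg ha1, abs_of_nonpos him2]
    rw [abs_div, habs, abs_of_pos hD, div_le_iff₀ hD]
    nlinarith [mul_le_mul_of_nonneg_left htε ha1,
      mul_le_mul_of_nonneg_left hd4 (mul_nonneg ha1 hε.le),
      mul_nonneg (mul_nonneg ha1 hε.le) (sq_nonneg z.im)]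
  -- bound on the imaginary part of the sum
  have hsum : |(∑ k ∈ Finset.range (N+1), ((a k:ℂ)/((lam k:ℂ) - z))).im| ≤ α^2*ε + ε := by
    rw [Complex.im_sum]
    calc |∑ k ∈ Finset.range (N+1), ((a k:ℂ)/((lam k:ℂ) - z)).im|
        ≤ ∑ k ∈ Finset.range (N+1), |((a k:ℂ)/((lam k:ℂ) - z)).im| :=
          Finset.abs_sum_le_sum_abs _ _
      _ = (∑ k ∈ Finset.range (K+1), |((a k:ℂ)/((lam k:ℂ) - z)).im|)
          + ∑ k ∈ Finset.Ico (K+1) (N+1), |((a k:ℂ)/((lam k:ℂ) - z)).im| :=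
          (Finset.sum_range_add_sum_Ico _ (by omega : K+1 ≤ N+1)).symm
      _ ≤ (∑ k ∈ Finset.range (K+1), α^2/(2*(L:ℝ)))
          + ∑ k ∈ Finset.Ico (K+1) (N+1), a k * ε :=
          add_le_add (Finset.sum_le_sum hnearbd) (Finset.sum_le_sum hfarbd)
      _ ≤ α^2*ε + ε := by
          have e1 : (∑ _k ∈ Finset.range (K+1), α^2/(2*(L:ℝ)))
              = ((K:ℝ)+1) * (α^2/(2*L)) := by
            rw [Finset.sum_const, Finset.card_range, nsmul_eq_mul]
            push_cast
            ring
          have e2 : (∑ k ∈ Finset.Ico (K+1) (N+1), a k * ε)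
              = (∑ k ∈ Finset.Ico (K+1) (N+1), a k) * ε := by
            rw [Finset.sum_mul]
          have hIco : (∑ k ∈ Finset.Ico (K+1) (N+1), a k) ≤ 1 := by
            have hsplit := Finset.sum_range_add_sum_Ico a (show K+1 ≤ N+1 by omega)
            have hpos : 0 ≤ ∑ k ∈ Finset.range (K+1), a k :=
              Finset.sum_nonneg fun k hk => hnear4 k (Finset.mem_range_succ_iff.mp hk)
            linarith
          have b1 : ((K:ℝ)+1) * (α^2/(2*L)) ≤ α^2*ε := by
            rw [mul_div_assoc', div_le_iff₀ (by positivity : (0:ℝ) < 2*L)]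
            nlinarith [sq_nonneg α, hK2, hεL]
          have b2 : (∑ k ∈ Finset.Ico (K+1) (N+1), a k) * ε ≤ ε := by
            calc (∑ k ∈ Finset.Ico (K+1) (N+1), a k) * ε ≤ 1 * ε :=
                mul_le_mul_of_nonneg_right hIco hε.le
              _ = ε := one_mul ε
          rw [e1, e2]
          linarith
  -- imaginary part of w
  set u : ℂ := (4:ℂ) - z^2 with hu
  have hure : κ ≤ u.re := by
    have h : u.re = 4 - z.re^2 + z.im^2 := by
      simp [hu, pow_two, Complex.mul_re]
      ring
    rw [h]
    have hx1 : z.re ≤ 2 - κ/2 := by linarith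
    have hx2 : -(2 - κ/2) ≤ z.re := by linarith
    have hsq : z.re^2 ≤ (2 - κ/2)^2 := sq_le_sq' hx2 hx1
    have hκκ : κ*κ < 2*κ := mul_lt_mul_of_pos_right hκ2 hκ0
    linarith [hsq, sq_nonneg z.im, hκκ]
  have hsre : Real.sqrt κ ≤ (u ^ ((1:ℂ)/2)).re := by
    refine le_trans ?_ (sqrt_re_le_re_cpow_half u)
    exact Real.sqrt_le_sqrt hure
  have hwim : (w z).im = (z.im + (u ^ ((1:ℂ)/2)).re)/2 := by
    rw [hu]
    simp only [w]
    rw [Complex.div_im]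
    simp [Complex.normSq_apply]
    ring
  -- conclude
  have h0 : ((∑ k ∈ Finset.range (N + 1), (a k : ℂ) / ((lam k : ℂ) - z)) + w z).im = 0 := by
    rw [heq]; exact Complex.zero_im
  rw [Complex.add_im, hwim] at h0
  have hS := abs_le.mp hsum
  obtain ⟨S, hS1, hS2, hSeq⟩ :
      ∃ S : ℝ, -(α^2*ε + ε) ≤ S ∧ S ≤ α^2*ε + ε ∧
        S + (z.im + (u ^ ((1:ℂ)/2)).re)/2 = 0 :=
    ⟨_, hS.1, hS.2, h0⟩
  clear hS h0 hsum heq hne hnearbd hfarbd hwim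
  have hfinal : Real.sqrt κ ≤ (2*α^2+3)*ε := by
    linarith [hS1, hS2, hsre, him1, hε5, hSeq]
  have hlt : (2*α^2+3)*ε < Real.sqrt κ := by
    have := (lt_div_iff₀ hCpos).mp hεC
    linarith
  linarith
end

section
/- For every α ≥ 1 there exist constants C₀ ≥ 1, C ≥ 1 and ε₀ ∈ (0,1), depending only on α, such that the following holds. Let ε ∈ (0, ε₀), L ≥ 1, K ≤ εL, let E₀ ∈ ℝ, and let λ_0 < λ_1 < ⋯ < λ_K and a_0, …, a_K ≥ 0 satisfy (k+1)²/(αL²) ≤ λ_k − E₀ ≤ α(k+1)²/L² and a_k ≤ α(k+1)²/L³ for all 0 ≤ k ≤ K. Then for every x ∈ [E₀ − ε, E₀] and every y with C₀/L² ≤ y ≤ ε⁵ one has Σ_{k=0}^{K} a_k·y/((λ_k − x)² + y²) ≤ C·ε. -/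
open Finset

/-- Estimate (7.73) in the proof of Theorem 1.2: for `x ∈ [E₀ − ε, E₀]` and
`C₀/L² ≤ y ≤ ε⁵`, the imaginary part of the near-band-edge sum,
`Σ_k a_k y/((λ_k − x)² + y²)`, is at most `C ε`. -/
theorem stmt14 (α : ℝ) (hα : 1 ≤ α) :
    ∃ C₀ C ε₀ : ℝ, 1 ≤ C₀ ∧ 1 ≤ C ∧ 0 < ε₀ ∧ ε₀ < 1 ∧
    ∀ (ε : ℝ) (L K : ℕ) (E₀ : ℝ) (lam a : ℕ → ℝ),
      0 < ε → ε < ε₀ → 1 ≤ L → (K : ℝ) ≤ ε * L →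
      (∀ k m : ℕ, k < m → m ≤ K → lam k < lam m) →
      (∀ k ≤ K, ((k : ℝ) + 1) ^ 2 / (α * (L : ℝ) ^ 2) ≤ lam k - E₀ ∧
        lam k - E₀ ≤ α * ((k : ℝ) + 1) ^ 2 / (L : ℝ) ^ 2) →
      (∀ k ≤ K, 0 ≤ a k) →
      (∀ k ≤ K, a k ≤ α * ((k : ℝ) + 1) ^ 2 / (L : ℝ) ^ 3) →
      ∀ x y : ℝ, E₀ - ε ≤ x → x ≤ E₀ →
        C₀ / (L : ℝ) ^ 2 ≤ y → y ≤ ε ^ 5 →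
        ∑ k ∈ Finset.range (K + 1), a k * y / ((lam k - x) ^ 2 + y ^ 2) ≤ C * ε := by
  refine ⟨1, α ^ 2, 1/2, le_refl 1, by nlinarith, by norm_num, by norm_num, ?_⟩
  intro ε L K E₀ lam a hε hεlt hL1 hKεL _ hlam ha0 hab x y hx1 hx2 hy1 hy2
  have hαpos : (0:ℝ) < α := by linarith
  have hLpos : (0:ℝ) < (L:ℝ) := by exact_mod_cast Nat.lt_of_lt_of_le Nat.zero_lt_one hL1
  have hL2pos : (0:ℝ) < (L:ℝ) ^ 2 := by positivity
  have hypos : (0:ℝ) < y := lt_of_lt_of_le (by positivity) hy1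
  have hε1 : ε < 1 := by linarith
  -- εL ≥ 1
  have hεL : (1:ℝ) ≤ ε * L := by
    have h1 : (1:ℝ) ≤ (L:ℝ)^2 * ε^5 := by
      have := le_trans hy1 hy2
      rw [div_le_iff₀ hL2pos] at this
      linarith [this]
    nlinarith [sq_nonneg (ε * L - 1), pow_pos hε 5, pow_pos hε 3, sq_nonneg ε,
      mul_pos hε hLpos, pow_le_one₀ hε.le hε1.le (n := 3)]
  -- per-term bound
  have hterm : ∀ k ∈ Finset.range (K + 1),
      a k * y / ((lam k - x) ^ 2 + y ^ 2) ≤ α ^ 2 / (2 * L) := by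
    intro k hk
    have hkK : k ≤ K := Nat.lt_succ_iff.mp (Finset.mem_range.mp hk)
    set A : ℝ := ((k:ℝ) + 1) ^ 2 / (α * (L:ℝ) ^ 2) with hA
    have hApos : 0 < A := by positivity
    have hlow : A ≤ lam k - x := le_trans (hlam k hkK).1 (by linarith)
    have hak : a k ≤ α * ((k : ℝ) + 1) ^ 2 / (L : ℝ) ^ 3 := hab k hkK
    have hak0 : 0 ≤ a k := ha0 k hkK
    have hD : 2 * A * y ≤ (lam k - x) ^ 2 + y ^ 2 := by
      nlinarith [sq_nonneg (A - y), sq_nonneg (lam k - x - A)]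
    have h2Ay : 0 < 2 * A * y := by positivity
    calc a k * y / ((lam k - x) ^ 2 + y ^ 2)
        ≤ a k * y / (2 * A * y) :=
          div_le_div_of_nonneg_left (by positivity) h2Ay hD
      _ = a k / (2 * A) := by
          field_simp
      _ ≤ α ^ 2 / (2 * L) := by
          rw [div_le_div_iff₀ (by positivity) (by positivity)]
          calc a k * (2 * (L:ℝ))
              ≤ (α * ((k:ℝ)+1)^2 / (L:ℝ)^3) * (2 * (L:ℝ)) :=
                mul_le_mul_of_nonneg_right hak (by positivity)
            _ = α ^ 2 * (2 * A) := by rw [hA]; field_simp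
  have hsum := Finset.sum_le_card_nsmul _ _ _ hterm
  simp only [Finset.card_range, nsmul_eq_mul] at hsum
  push_cast at hsum
  refine hsum.trans ?_
  have hK1 : ((K:ℝ) + 1) ≤ 2 * (ε * L) := by
    linarith
  calc ((K:ℝ) + 1) * (α ^ 2 / (2 * L))
      ≤ 2 * (ε * L) * (α ^ 2 / (2 * L)) := by
        apply mul_le_mul_of_nonneg_right (by linarith) (by positivity)
    _ = α ^ 2 * ε := by field_simp
end

section
/- Let θ₁ > 0 and M ≥ 1, let 0 < r ≤ θ₁/(10M), let g : [0, r] → ℝ be continuously differentiable with |g(t)| ≤ M and |g'(t)| ≤ M for all t ∈ [0, r], let c₀ ∈ [−π/2, 0], and define φ(t) := θ₁·t + t²·g(t). Then there exist ε₀ ∈ (0,1), α ≥ 1 and L₀ ≥ 1, depending only on θ₁, M and r, with the following property: for all ε ∈ (0, ε₀) and all integers L ≥ L₀, if t_k ∈ [0, r] satisfy φ(t_k) = ((k+1)π + c₀)/L for every integer k with 0 ≤ k ≤ εL, then, setting x_k := t_k², one has (k+1)²/(αL²) ≤ x_k ≤ α(k+1)²/L² for all 0 ≤ k ≤ εL,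 and (k² − m²)/(αL²) ≤ x_k − x_m ≤ α(k² − m²)/L² for all 0 ≤ m < k ≤ εL. -/
set_option maxHeartbeats 4000000


/-- Lemma 3.4 (reduced form): if the quantization condition
`φ(t_k) = ((k+1)π + c₀)/L` holds with `φ(t) = θ₁ t + t² g(t)`, `θ₁ > 0`, `g` of
class `C¹` and bounded together with its derivative by `M` on `[0, r]`, then
`x_k := t_k²` satisfies `x_k ≍ (k+1)²/L²` and `x_k − x_m ≍ (k² − m²)/L²`,
with constants `ε₀`, `α`, `L₀` depending only on `θ₁`, `M` and `r`. -/
theorem stmt15 (θ₁ M r : ℝ) (hθ₁ : 0 < θ₁) (hM : 1 ≤ M)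
    (hr0 : 0 < r) (hr : r ≤ θ₁ / (10 * M)) :
    ∃ ε₀ α : ℝ, ∃ L₀ : ℕ, 0 < ε₀ ∧ ε₀ < 1 ∧ 1 ≤ α ∧ 1 ≤ L₀ ∧
    ∀ g g' : ℝ → ℝ,
      (∀ t ∈ Set.Icc (0 : ℝ) r, HasDerivWithinAt g (g' t) (Set.Icc (0 : ℝ) r) t) →
      ContinuousOn g' (Set.Icc (0 : ℝ) r) →
      (∀ t ∈ Set.Icc (0 : ℝ) r, |g t| ≤ M) →
      (∀ t ∈ Set.Icc (0 : ℝ) r, |g' t| ≤ M) →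
    ∀ c₀ : ℝ, c₀ ∈ Set.Icc (-(Real.pi / 2)) 0 →
    ∀ ε : ℝ, 0 < ε → ε < ε₀ →
    ∀ L : ℕ, L₀ ≤ L →
    ∀ t : ℕ → ℝ,
      (∀ k : ℕ, (k : ℝ) ≤ ε * L →
        t k ∈ Set.Icc (0 : ℝ) r ∧
        θ₁ * t k + (t k) ^ 2 * g (t k) = (((k : ℝ) + 1) * Real.pi + c₀) / (L : ℝ)) →
      (∀ k : ℕ, (k : ℝ) ≤ ε * L →
        ((k : ℝ) + 1) ^ 2 / (α * (L : ℝ) ^ 2) ≤ (t k) ^ 2 ∧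
        (t k) ^ 2 ≤ α * ((k : ℝ) + 1) ^ 2 / (L : ℝ) ^ 2) ∧
      (∀ k m : ℕ, m < k → (k : ℝ) ≤ ε * L →
        ((k : ℝ) ^ 2 - (m : ℝ) ^ 2) / (α * (L : ℝ) ^ 2) ≤ (t k) ^ 2 - (t m) ^ 2 ∧
        (t k) ^ 2 - (t m) ^ 2 ≤ α * ((k : ℝ) ^ 2 - (m : ℝ) ^ 2) / (L : ℝ) ^ 2) := by
  have hM0 : (0:ℝ) < M := lt_of_lt_of_le one_pos hM
  have hπ0 : (0:ℝ) < Real.pi := Real.pi_pos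
  have hπ3 : (3:ℝ) < Real.pi := Real.pi_gt_three
  have hπ315 : Real.pi < 3.15 := Real.pi_lt_d2
  have hπ2l : (9:ℝ) < Real.pi^2 := by nlinarith only [hπ3]
  have hπ2u : Real.pi^2 < 10 := by nlinarith only [hπ315, hπ0]
  have hrM : r * M ≤ θ₁ / 10 := by
    have h10 : (0:ℝ) < 10 * M := by positivity
    have h := (le_div_iff₀ h10).mp hr
    linarith only [h]
  set δ : ℝ := min r (1/10) with hδdef
  have hδ0 : 0 < δ := lt_min hr0 (by norm_num)
  have hδr : δ ≤ r := min_le_left _ _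
  have hδ10 : δ ≤ 1/10 := min_le_right _ _
  set c : ℝ := min (1/2) (θ₁ * δ / (8 * Real.pi)) with hcdef
  have hc0 : 0 < c := lt_min (by norm_num) (by positivity)
  have hc2 : c ≤ 1/2 := min_le_left _ _
  have hcδ : c * (8 * Real.pi) ≤ θ₁ * δ := by
    have h := min_le_right (1/2:ℝ) (θ₁ * δ / (8 * Real.pi))
    have h8 : (0:ℝ) < 8 * Real.pi := by positivity
    calc c * (8*Real.pi) ≤ (θ₁*δ/(8*Real.pi)) * (8*Real.pi) :=
          mul_le_mul_of_nonneg_right h h8.le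
    _ = θ₁ * δ := by field_simp
  set β : ℝ := θ₁⁻¹ with hβdef
  have hβ0 : 0 < β := by positivity
  have hββ : θ₁ * β = 1 := mul_inv_cancel₀ hθ₁.ne'
  have hββ2 : θ₁^2 * β^2 = 1 := by rw [← mul_pow, hββ, one_pow]
  set A : ℝ := 100*(θ₁^2 + β^2 + 1) with hAdef
  have hα1 : 100*θ₁^2 ≤ A := by
    rw [hAdef]; linarith only [sq_nonneg β]
  have hα2 : 100*β^2 ≤ A := by
    rw [hAdef]; linarith only [sq_nonneg θ₁]
  have hA1 : (1:ℝ) ≤ A := by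
    rw [hAdef]; linarith only [sq_nonneg θ₁, sq_nonneg β]
  have hA0 : (0:ℝ) < A := by linarith only [hA1]
  clear_value δ c β A
  refine ⟨c, A, ⌈1/c⌉₊, hc0, by linarith only [hc2], hA1,
    Nat.ceil_pos.mpr (by positivity), ?_⟩
  intro g g' hg hg'cont hgM hg'M c₀ hc₀ ε hε0 hεc L hLL t ht
  have hL1 : (1:ℝ) ≤ L := by
    have h1 : (1:ℕ) ≤ L := le_trans (Nat.ceil_pos.mpr (by positivity : (0:ℝ) < 1/c)) hLL
    exact_mod_cast h1
  have hL0 : (0:ℝ) < L := by linarith only [hL1]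
  have hLc : 1 ≤ c * L := by
    have h1 : (1/c : ℝ) ≤ (⌈1/c⌉₊ : ℝ) := Nat.le_ceil _
    have h2 : ((⌈1/c⌉₊:ℕ):ℝ) ≤ L := Nat.cast_le.mpr hLL
    have h3 := le_trans h1 h2
    calc (1:ℝ) = c * (1/c) := by field_simp
    _ ≤ c * L := mul_le_mul_of_nonneg_left h3 hc0.le
  -- bounds on φ(s) = θ₁ s + s² g s
  have hφb : ∀ s, 0 ≤ s → s ≤ r →
      (9/10)*θ₁*s ≤ θ₁*s + s^2*g s ∧ θ₁*s + s^2*g s ≤ (11/10)*θ₁*s := by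
    intro s hs0 hsr
    have h1 : |g s| ≤ M := hgM s ⟨hs0, hsr⟩
    have h2 := neg_abs_le (g s)
    have h3 := le_abs_self (g s)
    constructor <;>
    nlinarith only [mul_nonneg (mul_nonneg hs0 (sub_nonneg.mpr hsr)) hM0.le,
      mul_nonneg hs0 (sub_nonneg.mpr hrM),
      mul_nonneg (sub_nonneg.mpr h1) (mul_nonneg hs0 hs0),
      mul_nonneg (by linarith only [h2] : (0:ℝ) ≤ g s + |g s|) (mul_nonneg hs0 hs0),
      mul_nonneg (by linarith only [h3] : (0:ℝ) ≤ |g s| - g s) (mul_nonneg hs0 hs0)]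
  -- bounds on t k
  have htb : ∀ k : ℕ, (k:ℝ) ≤ ε*L →
      5*((k:ℝ)+1)*Real.pi ≤ t k * (11*θ₁*L) ∧
      t k * (9*θ₁*L) ≤ 10*((k:ℝ)+1)*Real.pi ∧ t k ≤ δ/3 := by
    intro k hk
    obtain ⟨⟨ht0, htr⟩, heq⟩ := ht k hk
    obtain ⟨h9, h11⟩ := hφb (t k) ht0 htr
    have hk0 : (0:ℝ) ≤ k := Nat.cast_nonneg k
    have heq' : (θ₁ * t k + (t k)^2 * g (t k)) * L = ((k:ℝ)+1)*Real.pi + c₀ := by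
      rw [heq]; field_simp
    have hlo1 : ((k:ℝ)+1)*Real.pi/2 ≤ (θ₁ * t k + (t k)^2 * g (t k)) * L := by
      rw [heq']
      linarith only [hc₀.1, mul_nonneg hk0 hπ0.le]
    have hhi1 : (θ₁ * t k + (t k)^2 * g (t k)) * L ≤ ((k:ℝ)+1)*Real.pi := by
      rw [heq']; linarith only [hc₀.2]
    have hmul9 := mul_le_mul_of_nonneg_right h9 hL0.le
    have hmul11 := mul_le_mul_of_nonneg_right h11 hL0.le
    have hfirst : 5*((k:ℝ)+1)*Real.pi ≤ t k * (11*θ₁*L) := by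
      nlinarith only [hlo1, hmul11]
    have hsecond : t k * (9*θ₁*L) ≤ 10*((k:ℝ)+1)*Real.pi := by
      nlinarith only [hhi1, hmul9]
    refine ⟨hfirst, hsecond, ?_⟩
    have hk2 : (k:ℝ)+1 ≤ 2*c*L := by
      linarith only [hk, hLc, mul_le_mul_of_nonneg_right hεc.le hL0.le]
    have hkπ := mul_le_mul_of_nonneg_right hk2 hπ0.le
    have hcL := mul_le_mul_of_nonneg_right hcδ hL0.le
    have hθδL : (0:ℝ) ≤ θ₁*δ*L := by positivity
    have hchain : t k * (9*θ₁*L) ≤ (δ/3) * (9*θ₁*L) := by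
      nlinarith only [hsecond, hkπ, hcL, hθδL]
    exact le_of_mul_le_mul_right hchain (by positivity)
  -- derivative of φ
  have hφd : ∀ x ∈ Set.Icc (0:ℝ) r, HasDerivWithinAt (fun y => θ₁*y + y^2*g y)
      (θ₁ + (2*x*g x + x^2*g' x)) (Set.Icc (0:ℝ) r) x := by
    intro x hx
    have h2 := (hasDerivWithinAt_pow 2 x (s := Set.Icc (0:ℝ) r)).mul (hg x hx)
    have h3 : HasDerivWithinAt (fun y : ℝ => θ₁*y) θ₁ (Set.Icc (0:ℝ) r) x := by
      simpa using (hasDerivWithinAt_id x (Set.Icc (0:ℝ) r)).const_mul θ₁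
    have h4 := h3.add h2
    exact h4.congr_deriv (by norm_num)
  -- mean value estimates
  have mvt : ∀ a b : ℝ, 0 < a → a < b → b ≤ δ/3 →
      θ₁/2*(b-a) ≤ (θ₁*b + b^2*g b) - (θ₁*a + a^2*g a) ∧
      (θ₁*b + b^2*g b) - (θ₁*a + a^2*g a) ≤ 2*θ₁*(b-a) := by
    intro a b ha0 hab hbδ
    have hbr : b < r := by linarith only [hbδ, hδ0, hδr]
    have hcont : ContinuousOn (fun y => θ₁*y + y^2*g y) (Set.Icc a b) := by
      apply ContinuousOn.mono (s := Set.Icc (0:ℝ) r)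
        (fun x hx => (hφd x hx).continuousWithinAt)
      intro x hx
      exact ⟨by linarith only [ha0, hx.1], by linarith only [hbr, hx.2]⟩
    have hdiff : ∀ x ∈ Set.Ioo a b,
        HasDerivAt (fun y => θ₁*y + y^2*g y) (θ₁ + (2*x*g x + x^2*g' x)) x := by
      intro x hx
      have hx0 : 0 < x := lt_trans ha0 hx.1
      have hxr : x < r := lt_trans hx.2 hbr
      exact (hφd x ⟨hx0.le, hxr.le⟩).hasDerivAt (Icc_mem_nhds hx0 hxr)
    obtain ⟨ξ, hξ, hsl⟩ := exists_hasDerivAt_eq_slope _ _ hab hcont hdiff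
    have hξ0 : (0:ℝ) ≤ ξ := by linarith only [ha0, hξ.1]
    have hξr : ξ ≤ r := by linarith only [hbr, hξ.2]
    have hξ10 : ξ ≤ 1/10 := by linarith only [hξ.2, hbδ, hδ10, hδ0]
    have hgξ : |g ξ| ≤ M := hgM ξ ⟨hξ0, hξr⟩
    have hg'ξ : |g' ξ| ≤ M := hg'M ξ ⟨hξ0, hξr⟩
    have hb1 := neg_abs_le (g ξ); have hb2 := le_abs_self (g ξ)
    have hb3 := neg_abs_le (g' ξ); have hb4 := le_abs_self (g' ξ)
    have hDlo : θ₁/2 ≤ θ₁ + (2*ξ*g ξ + ξ^2*g' ξ) := by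
      nlinarith only [mul_nonneg hξ0 (by linarith only [hb1] : (0:ℝ) ≤ g ξ + |g ξ|),
        mul_nonneg hξ0 (by linarith only [hgξ] : (0:ℝ) ≤ M - |g ξ|),
        mul_nonneg (mul_nonneg hξ0 hξ0) (by linarith only [hb3] : (0:ℝ) ≤ g' ξ + |g' ξ|),
        mul_nonneg (mul_nonneg hξ0 hξ0) (by linarith only [hg'ξ] : (0:ℝ) ≤ M - |g' ξ|),
        mul_nonneg (mul_nonneg hξ0 hM0.le) (by linarith only [hξ10] : (0:ℝ) ≤ 1/10 - ξ),
        mul_nonneg (sub_nonneg.mpr hξr) hM0.le, hrM, hθ₁, hM0]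
    have hDhi : θ₁ + (2*ξ*g ξ + ξ^2*g' ξ) ≤ 2*θ₁ := by
      nlinarith only [mul_nonneg hξ0 (by linarith only [hb2] : (0:ℝ) ≤ |g ξ| - g ξ),
        mul_nonneg hξ0 (by linarith only [hgξ] : (0:ℝ) ≤ M - |g ξ|),
        mul_nonneg (mul_nonneg hξ0 hξ0) (by linarith only [hb4] : (0:ℝ) ≤ |g' ξ| - g' ξ),
        mul_nonneg (mul_nonneg hξ0 hξ0) (by linarith only [hg'ξ] : (0:ℝ) ≤ M - |g' ξ|),
        mul_nonneg (mul_nonneg hξ0 hM0.le) (by linarith only [hξ10] : (0:ℝ) ≤ 1/10 - ξ),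
        mul_nonneg (sub_nonneg.mpr hξr) hM0.le, hrM, hθ₁, hM0]
    have hba : (0:ℝ) < b - a := by linarith only [hab]
    have hsl' : θ₁ + (2*ξ*g ξ + ξ^2*g' ξ)
        = ((θ₁*b + b^2*g b) - (θ₁*a + a^2*g a))/(b-a) := hsl
    have hEq : (θ₁*b + b^2*g b) - (θ₁*a + a^2*g a)
        = (θ₁ + (2*ξ*g ξ + ξ^2*g' ξ)) * (b-a) := by
      rw [hsl', div_mul_cancel₀ _ (ne_of_gt hba)]
    constructor
    · rw [hEq]; exact mul_le_mul_of_nonneg_right hDlo hba.le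
    · rw [hEq]; exact mul_le_mul_of_nonneg_right hDhi hba.le
  constructor
  · -- Part 1
    intro k hk
    obtain ⟨hlo, hhi, -⟩ := htb k hk
    have ht0 : 0 ≤ t k := (ht k hk).1.1
    have hk0 : (0:ℝ) ≤ k := Nat.cast_nonneg k
    constructor
    · rw [div_le_iff₀ (by positivity)]
      have hsq : (5*((k:ℝ)+1)*Real.pi)^2 ≤ (t k * (11*θ₁*L))^2 :=
        pow_le_pow_left₀ (by positivity) hlo 2
      nlinarith only [hsq, mul_nonneg (sub_nonneg.mpr hα1) (sq_nonneg (t k * L)),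
        mul_nonneg (by linarith only [hπ2l] : (0:ℝ) ≤ Real.pi^2 - 9) (sq_nonneg ((k:ℝ)+1)),
        sq_nonneg ((k:ℝ)+1)]
    · rw [le_div_iff₀ (by positivity)]
      have hsq : (t k * (9*θ₁*L))^2 ≤ (10*((k:ℝ)+1)*Real.pi)^2 :=
        pow_le_pow_left₀ (by positivity) hhi 2
      have h2 : 81*(t k)^2*θ₁^2*L^2 ≤ 1000*((k:ℝ)+1)^2 := by
        nlinarith only [hsq,
          mul_nonneg (by linarith only [hπ2u] : (0:ℝ) ≤ 10 - Real.pi^2) (sq_nonneg ((k:ℝ)+1))]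
      have h3 : 81*(t k)^2*L^2 ≤ 1000*β^2*((k:ℝ)+1)^2 := by
        nlinarith only [mul_le_mul_of_nonneg_left h2 (sq_nonneg β), hββ2,
          sq_nonneg (t k * L)]
      nlinarith only [h3, mul_nonneg (sub_nonneg.mpr hα2) (sq_nonneg ((k:ℝ)+1)),
        sq_nonneg (t k * L)]
  · -- Part 2
    intro k m hmk hk
    have hmε : (m:ℝ) ≤ ε*L := le_trans (Nat.cast_le.mpr hmk.le) hk
    obtain ⟨hmlo, hmhi, hmδ3⟩ := htb m hmε
    obtain ⟨hklo, hkhi, hkδ3⟩ := htb k hk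
    obtain ⟨⟨ha0', har⟩, heqm⟩ := ht m hmε
    obtain ⟨⟨hb0', hbr⟩, heqk⟩ := ht k hk
    set a := t m with hadef
    set b := t k with hbdef
    have hk0 : (0:ℝ) ≤ k := Nat.cast_nonneg k
    have hm0 : (0:ℝ) ≤ m := Nat.cast_nonneg m
    have hkm1 : (1:ℝ) ≤ (k:ℝ) - m := by
      have h : (m:ℝ)+1 ≤ k := by exact_mod_cast hmk
      linarith only [h]
    have ha0 : 0 < a := by
      nlinarith only [hmlo, mul_pos hθ₁ hL0, mul_nonneg hm0 hπ0.le, hπ0]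
    have hb0 : 0 < b := by
      nlinarith only [hklo, mul_pos hθ₁ hL0, mul_nonneg hk0 hπ0.le, hπ0]
    have hab : a < b := by
      by_contra hle
      push_neg at hle
      have hφm : θ₁*b + b^2*g b ≤ θ₁*a + a^2*g a := by
        rcases eq_or_lt_of_le hle with he | hlt
        · rw [he]
        · have h := (mvt b a hb0 hlt hmδ3).1
          nlinarith only [h, mul_pos hθ₁ (sub_pos.mpr hlt)]
      rw [heqk, heqm, div_le_div_iff₀ hL0 hL0] at hφm
      nlinarith only [hφm, mul_pos hπ0 hL0, hkm1]
    obtain ⟨hmvt1, hmvt2⟩ := mvt a b ha0 hab hkδ3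
    have hφdiff : (θ₁*b + b^2*g b) - (θ₁*a + a^2*g a) = ((k:ℝ)-m)*Real.pi/L := by
      rw [heqk, heqm]; field_simp; ring
    rw [hφdiff] at hmvt1 hmvt2
    have hG1 : ((k:ℝ)-m)*Real.pi ≤ (b-a)*(2*θ₁*L) := by
      have h := (div_le_iff₀ hL0).mp hmvt2
      nlinarith only [h]
    have hG1' : (b-a)*(θ₁*L) ≤ 2*(((k:ℝ)-m)*Real.pi) := by
      have h := (le_div_iff₀ hL0).mp hmvt1
      nlinarith only [h]
    have hba0 : (0:ℝ) ≤ b - a := by linarith only [hab]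
    have hkmπ : (0:ℝ) ≤ ((k:ℝ)-m)*Real.pi :=
      mul_nonneg (by linarith only [hkm1]) hπ0.le
    have hba2 : (0:ℝ) ≤ b^2 - a^2 := by
      nlinarith only [mul_nonneg hba0 (by linarith only [ha0, hb0] : (0:ℝ) ≤ b + a)]
    have hkm2 : (0:ℝ) ≤ (k:ℝ)^2 - m^2 := by
      nlinarith only [mul_nonneg (by linarith only [hkm1] : (0:ℝ) ≤ (k:ℝ) - m)
        (by linarith only [hkm1, hm0] : (0:ℝ) ≤ (k:ℝ) + m)]
    constructor
    · rw [div_le_iff₀ (by positivity)]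
      have hG2 : 5*((k:ℝ)+1)*Real.pi ≤ (b+a)*(11*θ₁*L) := by
        nlinarith only [hklo, mul_nonneg ha0.le (by positivity : (0:ℝ) ≤ 11*θ₁*L)]
      have hprod := mul_le_mul hG1 hG2 (by positivity) (le_trans hkmπ hG1)
      nlinarith only [hprod,
        mul_nonneg (sub_nonneg.mpr hα1) (mul_nonneg (sq_nonneg (L:ℝ)) hba2),
        mul_nonneg (by linarith only [hπ2l] : (0:ℝ) ≤ Real.pi^2 - 9)
          (mul_nonneg (by linarith only [hkm1] : (0:ℝ) ≤ (k:ℝ)-m)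
            (by linarith only [hkm1, hm0] : (0:ℝ) ≤ (k:ℝ)+1)),
        mul_nonneg (by linarith only [hkm1] : (0:ℝ) ≤ (k:ℝ)-m)
          (by linarith only [hkm1] : (0:ℝ) ≤ (k:ℝ)-m+2),
        hkm2]
    · rw [le_div_iff₀ (by positivity)]
      have hG3 : (b+a)*(9*θ₁*L) ≤ 30*((k:ℝ)+m)*Real.pi := by
        nlinarith only [hkhi, hmhi,
          mul_nonneg (by linarith only [hkm1, hm0] : (0:ℝ) ≤ (k:ℝ)+m-1) hπ0.le]
      have hprod2 := mul_le_mul hG1' hG3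
        (by positivity) (le_trans (mul_nonneg hba0 (by positivity)) hG1')
      have h4 : 9*(b^2-a^2)*L^2 ≤ 60*Real.pi^2*β^2*((k:ℝ)^2-m^2) := by
        nlinarith only [mul_le_mul_of_nonneg_left hprod2 (sq_nonneg β), hββ2,
          mul_nonneg (sq_nonneg (L:ℝ)) hba2]
      nlinarith only [h4, mul_nonneg (sub_nonneg.mpr hα2) hkm2,
        mul_nonneg (by linarith only [hπ2u] : (0:ℝ) ≤ 10 - Real.pi^2)
          (mul_nonneg (sq_nonneg β) hkm2),
        mul_nonneg (sq_nonneg (L:ℝ)) hba2]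
end
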